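/- arXiv:2309.10928 — 4 statements merged into one kernel-verified Lean document; each statement's English description precedes it below -/
import Mathlib

section
/- Let G = (V,E) be a finite simple graph with an ordering of its edges, and let S ⊆ V. Then F_V(x) = Σ_{F ∈ 𝓕_{G,S}} x^{|F|} · F_{V − S − V(F)}(x), where the sum is over all broken-circuit-free forests F of G each of whose non-trivial components contains at least one vertex of S. -/
open Finset

attribute [local instance] Classical.propDecidable

variable {V : Type} [Fintype V] [DecidableEq V]

/-- Vertex support of an edge set: the non-isolated vertices `V(F)`. -/
def edgeSupp (F : Finset (Sym2 V)) : Finset V :=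
  Finset.univ.filter fun v => ∃ e ∈ F, v ∈ e

/-- The induced subgraph `G[U]`, viewed as a graph on the same vertex type. -/
def inducedOn (G : SimpleGraph V) (U : Finset V) : SimpleGraph V where
  Adj a b := G.Adj a b ∧ a ∈ U ∧ b ∈ U
  symm := ⟨fun a b ⟨h, ha, hb⟩ => ⟨h.symm, hb, ha⟩⟩
  loopless := ⟨fun a ⟨h, _, _⟩ => G.loopless.irrefl a h⟩

/-- `C` is the edge set of a cycle of `G`. -/
def IsCircuit (G : SimpleGraph V) (C : Finset (Sym2 V)) : Prop :=
  ∃ (v : V) (w : G.Walk v v), w.IsCycle ∧ C = w.edges.toFinset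

/-- `B` is a broken circuit of `G` w.r.t. the edge ordering `ord`. -/
def IsBrokenCircuit (G : SimpleGraph V) (ord : Sym2 V → ℕ) (B : Finset (Sym2 V)) : Prop :=
  ∃ C, IsCircuit G C ∧ ∃ e ∈ C, (∀ f ∈ C, ord f ≤ ord e) ∧ B = C.erase e

/-- `F` is a broken-circuit-free set of edges of `G`. -/
def IsBCF (G : SimpleGraph V) (ord : Sym2 V → ℕ) (F : Finset (Sym2 V)) : Prop :=
  F ⊆ G.edgeFinset ∧ ∀ B, IsBrokenCircuit G ord B → ¬ B ⊆ F

/-- The BCF generating function `F_U(x)` of the induced subgraph `G[U]`. -/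
noncomputable def bcfSumOn (G : SimpleGraph V) (U : Finset V) (ord : Sym2 V → ℕ)
    (x : ℝ) : ℝ :=
  ∑ F ∈ (inducedOn G U).edgeFinset.powerset.filter (IsBCF (inducedOn G U) ord),
    x ^ F.card

/-! ### Auxiliary lemmas -/

lemma mem_edgeSupp_iff {F : Finset (Sym2 V)} {v : V} :
    v ∈ edgeSupp F ↔ ∃ e ∈ F, v ∈ e := by
  simp [edgeSupp]

lemma mem_edgeSupp_of {F : Finset (Sym2 V)} {e : Sym2 V} {v : V}
    (he : e ∈ F) (hv : v ∈ e) : v ∈ edgeSupp F :=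
  mem_edgeSupp_iff.2 ⟨e, he, hv⟩

lemma inducedOn_univ (G : SimpleGraph V) : inducedOn G Finset.univ = G := by
  ext a b; simp [inducedOn]

lemma inducedOn_le (G : SimpleGraph V) (U : Finset V) : inducedOn G U ≤ G :=
  fun _ _ h => h.1

lemma mem_of_mem_inducedOn_edge {G : SimpleGraph V} {U : Finset V} {e : Sym2 V}
    (he : e ∈ (inducedOn G U).edgeSet) : ∀ v ∈ e, v ∈ U := by
  induction e using Sym2.ind with
  | _ x y =>
    intro v hv
    rw [SimpleGraph.mem_edgeSet] at he
    rcases Sym2.mem_iff.1 hv with rfl | rfl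
    · exact he.2.1
    · exact he.2.2

lemma isBCF_mono {G : SimpleGraph V} {ord : Sym2 V → ℕ} {F H : Finset (Sym2 V)}
    (hH : IsBCF G ord H) (hFH : F ⊆ H) : IsBCF G ord F :=
  ⟨hFH.trans hH.1, fun B hB hBF => hH.2 B hB (hBF.trans hFH)⟩

lemma isCircuit_edges_mem {G : SimpleGraph V} {C : Finset (Sym2 V)}
    (h : IsCircuit G C) : ∀ e ∈ C, e ∈ G.edgeSet := by
  obtain ⟨v, w, hw, rfl⟩ := h
  intro e he
  rw [List.mem_toFinset] at he
  exact w.edges_subset_edgeSet he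

lemma IsCircuit.transfer' {G₀ G₁ : SimpleGraph V} {C : Finset (Sym2 V)}
    (h : IsCircuit G₀ C) (hsub : ∀ e ∈ C, e ∈ G₁.edgeSet) : IsCircuit G₁ C := by
  obtain ⟨v, w, hw, rfl⟩ := h
  have hp : ∀ e ∈ w.edges, e ∈ G₁.edgeSet := fun e he => hsub e (List.mem_toFinset.2 he)
  exact ⟨v, w.transfer G₁ hp, hw.transfer hp, by rw [SimpleGraph.Walk.edges_transfer]⟩

lemma isBrokenCircuit_of_inducedOn {G : SimpleGraph V} {U : Finset V} {ord : Sym2 V → ℕ}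
    {B : Finset (Sym2 V)} (h : IsBrokenCircuit (inducedOn G U) ord B) :
    IsBrokenCircuit G ord B := by
  obtain ⟨C, hC, e, he, hmax, rfl⟩ := h
  exact ⟨C, hC.transfer' (fun f hf =>
      SimpleGraph.edgeSet_mono (inducedOn_le G U) (isCircuit_edges_mem hC f hf)),
    e, he, hmax, rfl⟩

lemma walk_split {G₀ : SimpleGraph V} :
    ∀ {u v : V} (p : G₀.Walk u v) (d : G₀.Dart), d ∈ p.darts →
      ∃ (p₁ : G₀.Walk u d.fst) (p₂ : G₀.Walk d.snd v),
        p.edges = p₁.edges ++ d.edge :: p₂.edges := by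
  intro u v p
  induction p with
  | nil => intro d hd; simp at hd
  | cons h p ih =>
    intro d hd
    rw [SimpleGraph.Walk.darts_cons, List.mem_cons] at hd
    rcases hd with rfl | hd
    · exact ⟨SimpleGraph.Walk.nil, p, by simp [SimpleGraph.Walk.edges_cons, SimpleGraph.Dart.edge]⟩
    · obtain ⟨p₁, p₂, hE⟩ := ih d hd
      exact ⟨SimpleGraph.Walk.cons h p₁, p₂, by simp [SimpleGraph.Walk.edges_cons, hE]⟩

lemma start_mem_edges {G₀ : SimpleGraph V} {u v : V} (p : G₀.Walk u v)
    (h : p.edges ≠ []) : ∃ e ∈ p.edges, u ∈ e := by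
  cases p with
  | nil => simp at h
  | cons h' p =>
    exact ⟨_, by rw [SimpleGraph.Walk.edges_cons]; exact List.mem_cons_self,
      Sym2.mem_mk_left _ _⟩

lemma end_mem_edges {G₀ : SimpleGraph V} {u v : V} (p : G₀.Walk u v)
    (h : p.edges ≠ []) : ∃ e ∈ p.edges, v ∈ e := by
  obtain ⟨e, he, hv⟩ := start_mem_edges p.reverse
    (by simpa [SimpleGraph.Walk.edges_reverse] using h)
  exact ⟨e, by simpa [SimpleGraph.Walk.edges_reverse] using he, hv⟩

lemma walk_edges_side {F F' : Finset (Sym2 V)}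
    (hd : Disjoint (edgeSupp F) (edgeSupp F')) {G₀ : SimpleGraph V} :
    ∀ {u v : V} (p : G₀.Walk u v), (∀ e ∈ p.edges, e ∈ F ∨ e ∈ F') →
      (∀ e ∈ p.edges, e ∈ F) ∨ (∀ e ∈ p.edges, e ∈ F') := by
  intro u v p
  induction p with
  | nil => intro _; left; simp
  | @cons a b c h' p ih =>
    intro h
    have hrest : ∀ e ∈ p.edges, e ∈ F ∨ e ∈ F' := fun e he => h e (by simp [he])
    have hmem := h s(a, b) (by simp)
    rcases ih hrest with hall | hall
    · rcases hmem with hF | hF'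
      · left
        intro e he
        rw [SimpleGraph.Walk.edges_cons, List.mem_cons] at he
        rcases he with rfl | he
        · exact hF
        · exact hall e he
      · by_cases hnil : p.edges = []
        · right
          intro e he
          rw [SimpleGraph.Walk.edges_cons, List.mem_cons] at he
          rcases he with rfl | he
          · exact hF'
          · rw [hnil] at he; simp at he
        · obtain ⟨f, hf, hbf⟩ := start_mem_edges p hnil
          exact absurd (mem_edgeSupp_of (hall f hf) hbf)
            (Finset.disjoint_right.1 hd (mem_edgeSupp_of hF' (Sym2.mem_mk_right a b)))
    · rcases hmem with hF | hF'
      · by_cases hnil : p.edges = []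
        · left
          intro e he
          rw [SimpleGraph.Walk.edges_cons, List.mem_cons] at he
          rcases he with rfl | he
          · exact hF
          · rw [hnil] at he; simp at he
        · obtain ⟨f, hf, hbf⟩ := start_mem_edges p hnil
          exact absurd (mem_edgeSupp_of (hall f hf) hbf)
            (Finset.disjoint_left.1 hd (mem_edgeSupp_of hF (Sym2.mem_mk_right a b)))
      · right
        intro e he
        rw [SimpleGraph.Walk.edges_cons, List.mem_cons] at he
        rcases he with rfl | he
        · exact hF'
        · exact hall e he

lemma circuit_erase_walk {G₀ : SimpleGraph V} {C : Finset (Sym2 V)} (h : IsCircuit G₀ C)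
    {e : Sym2 V} (he : e ∈ C) :
    ∃ (a b : V) (q : G₀.Walk b a), e = s(a, b) ∧ q.edges.toFinset = C.erase e ∧
      q.edges ≠ [] := by
  obtain ⟨v, w, hw, rfl⟩ := h
  rw [List.mem_toFinset] at he
  obtain ⟨d, hd, rfl⟩ : ∃ d ∈ w.darts, d.edge = e :=
    List.mem_map.1 (show e ∈ w.darts.map SimpleGraph.Dart.edge from he)
  obtain ⟨p₁, p₂, hE⟩ := walk_split w d hd
  have hnd : w.edges.Nodup := hw.isCircuit.isTrail.edges_nodup
  rw [hE] at hnd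
  obtain ⟨-, h₂', hdisj⟩ := List.nodup_append.1 hnd
  have h₂ : d.edge ∉ p₂.edges := (List.nodup_cons.1 h₂').1
  have h₁ : d.edge ∉ p₁.edges := fun hx => hdisj _ hx _ List.mem_cons_self rfl
  refine ⟨d.fst, d.snd, p₂.append p₁, rfl, ?_, ?_⟩
  · ext f
    simp only [List.mem_toFinset, SimpleGraph.Walk.edges_append, List.mem_append,
      Finset.mem_erase, hE, List.mem_cons]
    constructor
    · rintro (hf | hf)
      · exact ⟨fun hfe => h₂ (hfe ▸ hf), Or.inr (Or.inr hf)⟩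
      · exact ⟨fun hfe => h₁ (hfe ▸ hf), Or.inl hf⟩
    · rintro ⟨hne, hf | rfl | hf⟩
      · exact Or.inr hf
      · exact absurd rfl hne
      · exact Or.inl hf
  · intro hq
    rw [SimpleGraph.Walk.edges_append, List.append_eq_nil_iff] at hq
    rw [hq.1, hq.2] at hE
    have h3 := hw.three_le_length
    have h1 : w.edges.length = w.length := SimpleGraph.Walk.length_edges w
    rw [hE] at h1
    simp at h1
    omega

lemma bcf_union {G : SimpleGraph V} {ord : Sym2 V → ℕ} {U : Finset V}
    {F F' : Finset (Sym2 V)}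
    (hF : IsBCF G ord F) (hF' : IsBCF (inducedOn G U) ord F')
    (hdis : Disjoint (edgeSupp F) (edgeSupp F')) :
    IsBCF G ord (F ∪ F') := by
  constructor
  · intro e he
    rcases Finset.mem_union.1 he with he | he
    · exact hF.1 he
    · exact SimpleGraph.edgeFinset_mono (inducedOn_le G U) (hF'.1 he)
  · rintro B ⟨C, hC, e, heC, hmax, rfl⟩ hBsub
    obtain ⟨a, b, q, hab, hqe, hqnil⟩ := circuit_erase_walk hC heC
    have hq : ∀ f ∈ q.edges, f ∈ F ∨ f ∈ F' := fun f hf =>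
      Finset.mem_union.1 (hBsub (hqe ▸ List.mem_toFinset.2 hf))
    rcases walk_edges_side hdis q hq with hall | hall
    · exact hF.2 (C.erase e) ⟨C, hC, e, heC, hmax, rfl⟩
        (fun f hf => by rw [← hqe] at hf; exact hall f (List.mem_toFinset.1 hf))
    · have hBF' : C.erase e ⊆ F' := fun f hf => by
        rw [← hqe] at hf; exact hall f (List.mem_toFinset.1 hf)
      have haU : a ∈ U := by
        obtain ⟨f, hf, haf⟩ := end_mem_edges q hqnil
        exact mem_of_mem_inducedOn_edge
          (SimpleGraph.mem_edgeFinset.1 (hF'.1 (hall f hf))) a haf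
      have hbU : b ∈ U := by
        obtain ⟨f, hf, hbf⟩ := start_mem_edges q hqnil
        exact mem_of_mem_inducedOn_edge
          (SimpleGraph.mem_edgeFinset.1 (hF'.1 (hall f hf))) b hbf
      have hCU : IsCircuit (inducedOn G U) C := by
        refine hC.transfer' ?_
        intro f hf
        by_cases hfe : f = e
        · subst hfe
          rw [hab, SimpleGraph.mem_edgeSet]
          have hGadj : G.Adj a b := by
            have := isCircuit_edges_mem hC f heC
            rw [hab, SimpleGraph.mem_edgeSet] at this
            exact this
          exact ⟨hGadj, haU, hbU⟩
        · have hfB : f ∈ C.erase e := Finset.mem_erase.2 ⟨hfe, hf⟩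
          exact SimpleGraph.mem_edgeFinset.1 (hF'.1 (hBF' hfB))
      exact hF'.2 (C.erase e) ⟨C, hCU, e, heC, hmax, rfl⟩ hBF'

lemma reach_of_edge {H : Finset (Sym2 V)} {e : Sym2 V} (hnd : ¬ e.IsDiag) (he : e ∈ H)
    {a b : V} (ha : a ∈ e) (hb : b ∈ e) :
    (SimpleGraph.fromEdgeSet (↑H : Set (Sym2 V))).Reachable a b := by
  induction e using Sym2.ind with
  | _ x y =>
    have hxy : x ≠ y := by simpa [Sym2.mk_isDiag_iff] using hnd
    have hadj : (SimpleGraph.fromEdgeSet (↑H : Set (Sym2 V))).Adj x y :=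
      (SimpleGraph.fromEdgeSet_adj _).2 ⟨Finset.mem_coe.2 he, hxy⟩
    rcases Sym2.mem_iff.1 ha with rfl | rfl <;> rcases Sym2.mem_iff.1 hb with rfl | rfl
    · exact SimpleGraph.Reachable.refl _
    · exact hadj.reachable
    · exact hadj.symm.reachable
    · exact SimpleGraph.Reachable.refl _

lemma edge_mem_of_walk {H : Finset (Sym2 V)} {u v : V}
    (p : (SimpleGraph.fromEdgeSet (↑H : Set (Sym2 V))).Walk u v) {f : Sym2 V}
    (hf : f ∈ p.edges) : f ∈ H := by
  have h := p.edges_subset_edgeSet hf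
  rw [SimpleGraph.edgeSet_fromEdgeSet] at h
  exact Finset.mem_coe.1 h.1

/-- The edges of `H` lying in a component of `H` that meets `S`. -/
noncomputable def sComp (S : Finset V) (H : Finset (Sym2 V)) : Finset (Sym2 V) :=
  H.filter fun e => ∃ s ∈ S, ∃ a ∈ e,
    (SimpleGraph.fromEdgeSet (↑H : Set (Sym2 V))).Reachable a s

lemma sComp_subset (S : Finset V) (H : Finset (Sym2 V)) : sComp S H ⊆ H :=
  Finset.filter_subset _ _

lemma sComp_reach {G : SimpleGraph V} {S : Finset V} {H : Finset (Sym2 V)}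
    (hH : H ⊆ G.edgeFinset) :
    ∀ a ∈ edgeSupp (sComp S H), ∃ s ∈ S,
      (SimpleGraph.fromEdgeSet (↑(sComp S H) : Set (Sym2 V))).Reachable a s := by
  intro a ha
  obtain ⟨e, heP, hae⟩ := mem_edgeSupp_iff.1 ha
  obtain ⟨heH, s, hs, b, hbe, hreach⟩ := Finset.mem_filter.1 heP
  have hnd : ¬ e.IsDiag :=
    SimpleGraph.not_isDiag_of_mem_edgeSet G (SimpleGraph.mem_edgeFinset.1 (hH heH))
  obtain ⟨p⟩ := (reach_of_edge hnd heH hae hbe).trans hreach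
  have hpe : ∀ f ∈ p.edges,
      f ∈ (SimpleGraph.fromEdgeSet (↑(sComp S H) : Set (Sym2 V))).edgeSet := by
    intro f hfp
    have hfH : f ∈ H := edge_mem_of_walk p hfp
    rw [SimpleGraph.edgeSet_fromEdgeSet]
    refine ⟨Finset.mem_coe.2 ?_, SimpleGraph.not_isDiag_of_mem_edgeSet G
      (SimpleGraph.mem_edgeFinset.1 (hH hfH))⟩
    induction f using Sym2.ind with
    | _ x y =>
      have hx : x ∈ p.support := p.fst_mem_support_of_mem_edges hfp
      exact Finset.mem_filter.2 ⟨hfH, s, hs, x, Sym2.mem_mk_left x y,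
        ⟨p.dropUntil x hx⟩⟩
  exact ⟨s, hs, ⟨p.transfer _ hpe⟩⟩

lemma sdiff_sComp_subset {G : SimpleGraph V} {S : Finset V} {H : Finset (Sym2 V)}
    (hH : H ⊆ G.edgeFinset) :
    H \ sComp S H ⊆ (inducedOn G ((Finset.univ \ S) \ edgeSupp (sComp S H))).edgeFinset := by
  intro e he
  obtain ⟨heH, heN⟩ := Finset.mem_sdiff.1 he
  induction e using Sym2.ind with
  | _ x y =>
    have hpred : ¬ ∃ s ∈ S, ∃ a ∈ s(x, y),
        (SimpleGraph.fromEdgeSet (↑H : Set (Sym2 V))).Reachable a s :=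
      fun hp => heN (Finset.mem_filter.2 ⟨heH, hp⟩)
    have hadj : G.Adj x y :=
      (SimpleGraph.mem_edgeSet G).1 (SimpleGraph.mem_edgeFinset.1 (hH heH))
    have hU : ∀ a ∈ s(x, y), a ∈ (Finset.univ \ S) \ edgeSupp (sComp S H) := by
      intro a hae
      rw [Finset.mem_sdiff, Finset.mem_sdiff]
      refine ⟨⟨Finset.mem_univ a,
        fun haS => hpred ⟨a, haS, a, hae, SimpleGraph.Reachable.refl a⟩⟩, ?_⟩
      intro hasupp
      obtain ⟨f, hfP, haf⟩ := mem_edgeSupp_iff.1 hasupp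
      obtain ⟨hfH, s, hs, b, hbf, hreach⟩ := Finset.mem_filter.1 hfP
      have hnd : ¬ f.IsDiag :=
        SimpleGraph.not_isDiag_of_mem_edgeSet G (SimpleGraph.mem_edgeFinset.1 (hH hfH))
      exact hpred ⟨s, hs, a, hae, (reach_of_edge hnd hfH haf hbf).trans hreach⟩
    rw [SimpleGraph.mem_edgeFinset, SimpleGraph.mem_edgeSet]
    exact ⟨hadj, hU x (Sym2.mem_mk_left x y), hU y (Sym2.mem_mk_right x y)⟩

lemma sComp_union {G : SimpleGraph V} {S : Finset V} {F F' : Finset (Sym2 V)}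
    (hF : F ⊆ G.edgeFinset)
    (hScond : ∀ a ∈ edgeSupp F, ∃ s ∈ S,
      (SimpleGraph.fromEdgeSet (↑F : Set (Sym2 V))).Reachable a s)
    (hsupp' : ∀ v ∈ edgeSupp F', v ∉ S ∧ v ∉ edgeSupp F) :
    sComp S (F ∪ F') = F := by
  have hdis : Disjoint (edgeSupp F) (edgeSupp F') :=
    Finset.disjoint_right.2 fun v hv => (hsupp' v hv).2
  apply Finset.Subset.antisymm
  · intro e he
    obtain ⟨heU, s, hs, a, hae, hreach⟩ := Finset.mem_filter.1 he
    rcases Finset.mem_union.1 heU with heF | heF'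
    · exact heF
    · exfalso
      have haF' : a ∈ edgeSupp F' := mem_edgeSupp_of heF' hae
      obtain ⟨p⟩ := hreach
      cases p with
      | nil => exact (hsupp' _ haF').1 hs
      | cons hadj p' =>
        have hq : ∀ f ∈ (SimpleGraph.Walk.cons hadj p').edges, f ∈ F ∨ f ∈ F' := by
          intro f hf
          exact Finset.mem_union.1 (edge_mem_of_walk _ hf)
        have hne : (SimpleGraph.Walk.cons hadj p').edges ≠ [] := by
          rw [SimpleGraph.Walk.edges_cons]; simp
        rcases walk_edges_side hdis (SimpleGraph.Walk.cons hadj p') hq with hall | hall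
        · obtain ⟨f, hf, haf⟩ := start_mem_edges _ hne
          exact (hsupp' a haF').2 (mem_edgeSupp_of (hall f hf) haf)
        · obtain ⟨f, hf, hsf⟩ := end_mem_edges _ hne
          exact (hsupp' s (mem_edgeSupp_of (hall f hf) hsf)).1 hs
  · intro e heF
    refine Finset.mem_filter.2 ⟨Finset.mem_union_left _ heF, ?_⟩
    induction e using Sym2.ind with
    | _ x y =>
      obtain ⟨s, hs, hreach⟩ := hScond x (mem_edgeSupp_of heF (Sym2.mem_mk_left x y))
      exact ⟨s, hs, x, Sym2.mem_mk_left x y,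
        hreach.mono (SimpleGraph.fromEdgeSet_mono
          (Finset.coe_subset.2 Finset.subset_union_left))⟩

lemma disjoint_edges_of_disjoint_supp {F F' : Finset (Sym2 V)}
    (h : Disjoint (edgeSupp F) (edgeSupp F')) : Disjoint F F' := by
  rw [Finset.disjoint_left]
  intro e heF heF'
  induction e using Sym2.ind with
  | _ x y =>
    exact Finset.disjoint_left.1 h (mem_edgeSupp_of heF (Sym2.mem_mk_left x y))
      (mem_edgeSupp_of heF' (Sym2.mem_mk_left x y))

/-- Identity (3.7): `F_V(x) = Σ_{F ∈ 𝓕_{G,S}} x^{|F|} F_{V − S − V(F)}(x)`, where the sum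
is over BCF forests `F` of `G` each of whose non-trivial components meets `S`. -/
theorem bcf_recursion (G : SimpleGraph V) (ord : Sym2 V → ℕ)
    (hord : Set.InjOn ord G.edgeSet) (S : Finset V) (x : ℝ) :
    bcfSumOn G Finset.univ ord x =
      ∑ F ∈ G.edgeFinset.powerset.filter (fun F => IsBCF G ord F ∧
          ∀ a ∈ edgeSupp F, ∃ s ∈ S,
            (SimpleGraph.fromEdgeSet (↑F : Set (Sym2 V))).Reachable a s),
        x ^ F.card * bcfSumOn G ((Finset.univ \ S) \ edgeSupp F) ord x := by
  have key :
      ∑ H ∈ G.edgeFinset.powerset.filter (IsBCF G ord), x ^ H.card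
        = ∑ p ∈ (G.edgeFinset.powerset.filter (fun F => IsBCF G ord F ∧
            ∀ a ∈ edgeSupp F, ∃ s ∈ S,
              (SimpleGraph.fromEdgeSet (↑F : Set (Sym2 V))).Reachable a s)).sigma
            (fun F => (inducedOn G ((Finset.univ \ S) \ edgeSupp F)).edgeFinset.powerset.filter
              (IsBCF (inducedOn G ((Finset.univ \ S) \ edgeSupp F)) ord)),
          x ^ p.1.card * x ^ p.2.card := by
    refine Finset.sum_nbij' (fun H => ⟨sComp S H, H \ sComp S H⟩)
      (fun p => p.1 ∪ p.2) ?_ ?_ ?_ ?_ ?_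
    · -- hi
      intro H hH
      obtain ⟨hHp, hHbcf⟩ := Finset.mem_filter.1 hH
      have hHsub : H ⊆ G.edgeFinset := Finset.mem_powerset.1 hHp
      rw [Finset.mem_sigma]
      constructor
      · refine Finset.mem_filter.2 ⟨Finset.mem_powerset.2
          ((sComp_subset S H).trans hHsub), ?_, ?_⟩
        · exact isBCF_mono hHbcf (sComp_subset S H)
        · exact sComp_reach hHsub
      · refine Finset.mem_filter.2 ⟨Finset.mem_powerset.2 (sdiff_sComp_subset hHsub), ?_⟩
        refine ⟨sdiff_sComp_subset hHsub, ?_⟩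
        intro B hB hBsub
        exact hHbcf.2 B (isBrokenCircuit_of_inducedOn hB)
          (hBsub.trans Finset.sdiff_subset)
    · -- hj
      rintro ⟨F, F'⟩ hp
      rw [Finset.mem_sigma] at hp
      obtain ⟨hpF, hpF'⟩ := hp
      obtain ⟨hFp, hFbcf, hFS⟩ := Finset.mem_filter.1 hpF
      obtain ⟨hF'p, hF'bcf⟩ := Finset.mem_filter.1 hpF'
      have hF'sub := Finset.mem_powerset.1 hF'p
      have hsupp' : ∀ v ∈ edgeSupp F', v ∈ (Finset.univ \ S) \ edgeSupp F := by
        intro v hv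
        obtain ⟨e, heF', hve⟩ := mem_edgeSupp_iff.1 hv
        exact mem_of_mem_inducedOn_edge
          (SimpleGraph.mem_edgeFinset.1 (hF'sub heF')) v hve
      have hdis : Disjoint (edgeSupp F) (edgeSupp F') :=
        Finset.disjoint_right.2 fun v hv => by
          have h := hsupp' v hv
          rw [Finset.mem_sdiff] at h
          exact h.2
      have hbcf := bcf_union hFbcf hF'bcf hdis
      exact Finset.mem_filter.2 ⟨Finset.mem_powerset.2 hbcf.1, hbcf⟩
    · -- left_inv
      intro H hH
      exact Finset.union_sdiff_of_subset (sComp_subset S H)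
    · -- right_inv
      rintro ⟨F, F'⟩ hp
      rw [Finset.mem_sigma] at hp
      obtain ⟨hpF, hpF'⟩ := hp
      obtain ⟨hFp, hFbcf, hFS⟩ := Finset.mem_filter.1 hpF
      obtain ⟨hF'p, hF'bcf⟩ := Finset.mem_filter.1 hpF'
      have hFsub : F ⊆ G.edgeFinset := Finset.mem_powerset.1 hFp
      have hF'sub := Finset.mem_powerset.1 hF'p
      have hsupp' : ∀ v ∈ edgeSupp F', v ∈ (Finset.univ \ S) \ edgeSupp F := by
        intro v hv
        obtain ⟨e, heF', hve⟩ := mem_edgeSupp_iff.1 hv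
        exact mem_of_mem_inducedOn_edge
          (SimpleGraph.mem_edgeFinset.1 (hF'sub heF')) v hve
      have hdis : Disjoint (edgeSupp F) (edgeSupp F') :=
        Finset.disjoint_right.2 fun v hv => by
          have h := hsupp' v hv
          rw [Finset.mem_sdiff] at h
          exact h.2
      have hkey : sComp S (F ∪ F') = F := by
        refine sComp_union hFsub hFS ?_
        intro v hv
        have h := hsupp' v hv
        rw [Finset.mem_sdiff, Finset.mem_sdiff] at h
        exact ⟨h.1.2, h.2⟩
      have hdisFF' : Disjoint F F' := disjoint_edges_of_disjoint_supp hdis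
      show (⟨sComp S (F ∪ F'), (F ∪ F') \ sComp S (F ∪ F')⟩ :
        (_ : Finset (Sym2 V)) × Finset (Sym2 V)) = ⟨F, F'⟩
      rw [hkey, Finset.union_sdiff_cancel_left hdisFF']
    · -- values
      intro H hH
      obtain ⟨hHp, _⟩ := Finset.mem_filter.1 hH
      show x ^ H.card = x ^ (sComp S H).card * x ^ (H \ sComp S H).card
      rw [← pow_add]
      congr 1
      have h := Finset.card_sdiff_add_card_eq_card (sComp_subset S H)
      omega
  unfold bcfSumOn
  rw [inducedOn_univ, key, Finset.sum_sigma]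
  refine Finset.sum_congr rfl fun F hF => ?_
  rw [Finset.mul_sum]
end

section
/- Let G = (V,E) be a finite multigraph, let v ∈ V, and suppose every vertex except possibly v has degree at most Δ ∈ ℕ. Then for every vertex u ≠ v and every c ∈ [0,1], Σ_{P ∈ 𝓟_{G,u,v}} (c/Δ)^{|P|} ≤ c, where 𝓟_{G,u,v} is the set of paths in G from u to v and |P| is the number of edges of P. -/
open Finset

attribute [local instance] Classical.propDecidable

variable {V E : Type} [Fintype V] [Fintype E] [DecidableEq V] [DecidableEq E]

/-- `chainOk ends vs es` says that the vertex list `vs` and edge list `es` form a walk: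
`vs = [w₀, …, w_k]`, `es = [e₁, …, e_k]` and `ends eᵢ = s(w_{i-1}, w_i)`. -/
def chainOk (ends : E → Sym2 V) : List V → List E → Prop
  | [_], [] => True
  | a :: b :: vs, e :: es => ends e = s(a, b) ∧ chainOk ends (b :: vs) es
  | _, _ => False

/-- `es` is (the edge list of) a path from `u` to `v` in the multigraph with edge-end
map `ends`: a walk with distinct vertices. -/
def IsPathList (ends : E → Sym2 V) (u v : V) (es : List E) : Prop :=
  ∃ vs : List V, vs.Nodup ∧ vs.head? = some u ∧ vs.getLast? = some v ∧ chainOk ends vs es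

/-- `P` is the edge set of a path from `u` to `v`. -/
def IsPathSet (ends : E → Sym2 V) (u v : V) (P : Finset E) : Prop :=
  ∃ es : List E, es.Nodup ∧ es.toFinset = P ∧ IsPathList ends u v es

/-- The set `𝓟_{G,u,v}` of (edge sets of) paths from `u` to `v`. -/
noncomputable def pathSets (ends : E → Sym2 V) (u v : V) : Finset (Finset E) :=
  Finset.univ.filter (IsPathSet ends u v)

/-- Degree of a vertex in a multigraph: loops count twice. -/
def mdeg (ends : E → Sym2 V) (v : V) : ℕ :=
  ∑ e : E, (if ends e = s(v, v) then 2 else if v ∈ ends e then 1 else 0)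

/-- Paths avoiding a forbidden vertex set `F`. -/
noncomputable def pathSetsA (ends : E → Sym2 V) (F : Finset V) (u v : V) :
    Finset (Finset E) :=
  Finset.univ.filter (fun P => ∃ es : List E, es.Nodup ∧ es.toFinset = P ∧
    ∃ vs : List V, vs.Nodup ∧ (∀ w ∈ vs, w ∉ F) ∧ vs.head? = some u ∧
      vs.getLast? = some v ∧ chainOk ends vs es)

lemma mem_pathSetsA {ends : E → Sym2 V} {F : Finset V} {u v : V} {P : Finset E} :
    P ∈ pathSetsA ends F u v ↔ ∃ es : List E, es.Nodup ∧ es.toFinset = P ∧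
    ∃ vs : List V, vs.Nodup ∧ (∀ w ∈ vs, w ∉ F) ∧ vs.head? = some u ∧
      vs.getLast? = some v ∧ chainOk ends vs es := by
  simp [pathSetsA]

lemma pathSetsA_eq_empty {ends : E → Sym2 V} {F : Finset V} {u v : V} (hu : u ∈ F) :
    pathSetsA ends F u v = ∅ := by
  ext P
  simp only [mem_pathSetsA, Finset.notMem_empty, iff_false, not_exists]
  rintro es ⟨-, -, vs, -, hav, hh, -, -⟩
  cases vs with
  | nil => simp at hh
  | cons a t =>
    simp only [List.head?_cons, Option.some.injEq] at hh
    subst hh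
    exact hav _ (List.mem_cons_self) hu

lemma pathSetsA_self_subset {ends : E → Sym2 V} {F : Finset V} {v : V} :
    pathSetsA ends F v v ⊆ {∅} := by
  intro P hP
  rw [mem_pathSetsA] at hP
  obtain ⟨es, -, hfs, vs, hnd, -, hh, hl, hchain⟩ := hP
  cases vs with
  | nil => simp at hh
  | cons a t =>
    simp only [List.head?_cons, Option.some.injEq] at hh
    subst hh
    cases t with
    | nil =>
      cases es with
      | nil => simp [← hfs]
      | cons e es' => exact absurd hchain (by simp [chainOk])
    | cons b t' =>
      exfalso
      rw [List.getLast?_cons_cons] at hl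
      exact (List.nodup_cons.mp hnd).1 (List.mem_of_getLast? hl)

lemma pathSetsA_decomp {ends : E → Sym2 V} {F : Finset V} {u v : V} (huv : u ≠ v)
    {P : Finset E} (hP : P ∈ pathSetsA ends F u v) :
    ∃ e w, e ∈ P ∧ ends e = s(u, w) ∧ w ≠ u ∧
      P.erase e ∈ pathSetsA ends (insert u F) w v := by
  rw [mem_pathSetsA] at hP
  obtain ⟨es, hend, hfs, vs, hvnd, hav, hh, hl, hchain⟩ := hP
  cases vs with
  | nil => simp at hh
  | cons a t =>
    simp only [List.head?_cons, Option.some.injEq] at hh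
    obtain rfl := hh.symm
    cases t with
    | nil =>
      simp only [List.getLast?_singleton, Option.some.injEq] at hl
      exact absurd hl huv
    | cons b t' =>
      cases es with
      | nil => exact absurd hchain (by simp [chainOk])
      | cons e es' =>
        rw [List.getLast?_cons_cons] at hl
        obtain ⟨he, hrest⟩ := hchain
        have hnu : u ∉ b :: t' := (List.nodup_cons.mp hvnd).1
        refine ⟨e, b, ?_, he, fun h => hnu (h ▸ List.mem_cons_self), ?_⟩
        · rw [← hfs]; simp
        · rw [mem_pathSetsA]
          refine ⟨es', (List.nodup_cons.mp hend).2, ?_, b :: t',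
            (List.nodup_cons.mp hvnd).2, ?_, rfl, ?_, hrest⟩
          · rw [← hfs, List.toFinset_cons,
              Finset.erase_insert (by simp [(List.nodup_cons.mp hend).1])]
          · intro w hw
            simp only [Finset.mem_insert, not_or]
            exact ⟨fun h => hnu (h ▸ hw), hav _ (List.mem_cons_of_mem _ hw)⟩
          · exact hl

noncomputable def otherEnd (ends : E → Sym2 V) (u : V) (e : E) : V :=
  if h : ∃ w, ends e = s(u, w) then h.choose else u

lemma otherEnd_eq {ends : E → Sym2 V} {u w : V} {e : E}
    (h : ends e = s(u, w)) : otherEnd ends u e = w := by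
  rw [otherEnd, dif_pos ⟨w, h⟩]
  have hs := (⟨w, h⟩ : ∃ w, ends e = s(u, w)).choose_spec
  exact (Sym2.congr_right.mp (h.symm.trans hs)).symm


lemma main_ind (ends : E → Sym2 V) (v : V) (Δ : ℕ)
    (hdeg : ∀ w : V, w ≠ v → mdeg ends w ≤ Δ)
    (c : ℝ) (hc0 : 0 ≤ c) (hc1 : c ≤ 1) :
    ∀ n : ℕ, ∀ F : Finset V, (Finset.univ \ F).card ≤ n → ∀ u : V, u ≠ v →
      ∑ P ∈ pathSetsA ends F u v, (c / Δ) ^ P.card ≤ c := by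
  have hx0 : (0:ℝ) ≤ c / Δ := div_nonneg hc0 (Nat.cast_nonneg _)
  set x : ℝ := c / Δ with hxdef
  intro n
  induction n with
  | zero =>
    intro F hF u huv
    have hu : u ∈ F := by
      by_contra hu
      have h1 : u ∈ Finset.univ \ F := by simp [hu]
      have := Finset.card_pos.mpr ⟨u, h1⟩
      omega
    rw [pathSetsA_eq_empty hu]
    simpa using hc0
  | succ n ih =>
    intro F hF u huv
    by_cases hu : u ∈ F
    · rw [pathSetsA_eq_empty hu]; simpa using hc0
    have hF' : (Finset.univ \ insert u F).card ≤ n := by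
      have h1 : Finset.univ \ insert u F = (Finset.univ \ F).erase u := by
        ext a; simp [and_comm]
      rw [h1, Finset.card_erase_of_mem (by simp [hu])]
      omega
    have inner : ∀ w : V, ∑ P ∈ pathSetsA ends (insert u F) w v, x ^ P.card ≤ 1 := by
      intro w
      by_cases hw1 : w ∈ insert u F
      · rw [pathSetsA_eq_empty hw1]; simp
      by_cases hw2 : w = v
      · have hsub : pathSetsA ends (insert u F) w v ⊆ {∅} := by
          rw [hw2]; exact pathSetsA_self_subset
        rcases Finset.subset_singleton_iff.mp hsub with h | h <;> simp [h]
      · exact (ih (insert u F) hF' w hw2).trans hc1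
    set A := pathSetsA ends F u v with hA
    rcases Finset.eq_empty_or_nonempty A with hAe | ⟨P₀, hP₀⟩
    · rw [hAe]; simpa using hc0
    obtain ⟨e₀, -, -, -, -, -⟩ := pathSetsA_decomp huv hP₀
    set Eu : Finset E := Finset.univ.filter (fun e => u ∈ ends e ∧ ends e ≠ s(u, u)) with hEu
    set T : Finset (Σ _ : E, Finset E) :=
      Eu.sigma (fun e => pathSetsA ends (insert u F) (otherEnd ends u e) v) with hT
    set Φ : Finset E → (Σ _ : E, Finset E) := fun P =>
      if h : ∃ e w, e ∈ P ∧ ends e = s(u, w) ∧ w ≠ u ∧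
          P.erase e ∈ pathSetsA ends (insert u F) w v
      then ⟨h.choose, P.erase h.choose⟩ else ⟨e₀, ∅⟩ with hΦ
    have key : ∀ P ∈ A, (Φ P).1 ∈ P ∧ Φ P ∈ T ∧ (Φ P).2 = P.erase (Φ P).1 := by
      intro P hP
      have h := pathSetsA_decomp huv hP
      simp only [hΦ]
      rw [dif_pos h]
      obtain ⟨w, hw1, hw2, hw3, hw4⟩ := h.choose_spec
      refine ⟨hw1, ?_, rfl⟩
      rw [hT, Finset.mem_sigma]
      constructor
      · rw [hEu, Finset.mem_filter]
        refine ⟨Finset.mem_univ _, ?_, ?_⟩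
        · rw [hw2]; exact Sym2.mem_mk_left _ _
        · rw [hw2]; intro hcon; exact hw3 (Sym2.congr_right.mp hcon)
      · rw [otherEnd_eq hw2]; exact hw4
    have hinj : ∀ P₁ ∈ A, ∀ P₂ ∈ A, Φ P₁ = Φ P₂ → P₁ = P₂ := by
      intro P₁ h₁ P₂ h₂ heq
      have k₁ := key P₁ h₁
      have k₂ := key P₂ h₂
      have hfst : (Φ P₁).1 = (Φ P₂).1 := congrArg Sigma.fst heq
      have hsnd : (Φ P₁).2 = (Φ P₂).2 := by
        exact congrArg (fun p : (Σ _ : E, Finset E) => p.2) heq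
      rw [k₁.2.2, k₂.2.2, ← hfst] at hsnd
      calc P₁ = insert (Φ P₁).1 (P₁.erase (Φ P₁).1) := (Finset.insert_erase k₁.1).symm
        _ = insert (Φ P₁).1 (P₂.erase (Φ P₁).1) := by rw [hsnd]
        _ = P₂ := by rw [hfst, Finset.insert_erase k₂.1]
    have hcard : Eu.card ≤ Δ := by
      refine le_trans ?_ (hdeg u huv)
      rw [hEu, Finset.card_filter]
      unfold mdeg
      apply Finset.sum_le_sum
      intro e _
      by_cases hl : ends e = s(u,u)
      · simp [hl]
      · by_cases hm : u ∈ ends e <;> simp [hl, hm]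
    calc ∑ P ∈ A, x ^ P.card
        = ∑ p ∈ A.image Φ, x ^ p.2.card * x := by
          rw [Finset.sum_image hinj]
          refine Finset.sum_congr rfl fun P hP => ?_
          obtain ⟨h1, -, h3⟩ := key P hP
          rw [h3, ← Finset.card_erase_add_one h1, pow_succ,
            Finset.card_erase_of_mem h1]
      _ ≤ ∑ p ∈ T, x ^ p.2.card * x :=
          Finset.sum_le_sum_of_subset_of_nonneg
            (Finset.image_subset_iff.mpr fun P hP => (key P hP).2.1)
            (fun _ _ _ => mul_nonneg (pow_nonneg hx0 _) hx0)
      _ = ∑ e ∈ Eu, ∑ P' ∈ pathSetsA ends (insert u F) (otherEnd ends u e) v,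
            x ^ P'.card * x := by rw [hT, Finset.sum_sigma]
      _ ≤ ∑ _e ∈ Eu, 1 * x := by
          refine Finset.sum_le_sum fun e _ => ?_
          rw [← Finset.sum_mul]
          exact mul_le_mul_of_nonneg_right (inner _) hx0
      _ = Eu.card * x := by rw [Finset.sum_const]; simp [mul_comm]
      _ ≤ Δ * x := mul_le_mul_of_nonneg_right (Nat.cast_le.mpr hcard) hx0
      _ ≤ c := by
          rcases Nat.eq_zero_or_pos Δ with h | h
          · simp [h, hc0]
          · have : (Δ:ℝ) ≠ 0 := Nat.cast_ne_zero.mpr h.ne'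
            rw [hxdef, mul_comm, div_mul_cancel₀ _ this]

/-- Lemma 4.1: if every vertex of a finite multigraph except possibly `v` has degree at
most `Δ`, then for any `u ≠ v` and `c ∈ [0,1]`,
`Σ_{P ∈ 𝓟_{G,u,v}} (c/Δ)^{|P|} ≤ c`. -/
theorem path_generating_le (ends : E → Sym2 V) (v : V) (Δ : ℕ)
    (hdeg : ∀ w : V, w ≠ v → mdeg ends w ≤ Δ) (u : V) (hu : u ≠ v)
    (c : ℝ) (hc : c ∈ Set.Icc (0 : ℝ) 1) :
    ∑ P ∈ pathSets ends u v, (c / Δ) ^ P.card ≤ c := by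
  have hEq : pathSets ends u v = pathSetsA ends ∅ u v := by
    ext P
    simp only [pathSets, pathSetsA, Finset.mem_filter, Finset.mem_univ, true_and,
      IsPathSet, IsPathList, Finset.notMem_empty, not_false_iff]
    constructor
    · rintro ⟨es, h1, h2, vs, h3, h4, h5, h6⟩
      exact ⟨es, h1, h2, vs, h3, fun _ _ => trivial, h4, h5, h6⟩
    · rintro ⟨es, h1, h2, vs, h3, -, h4, h5, h6⟩
      exact ⟨es, h1, h2, vs, h3, h4, h5, h6⟩
  rw [hEq]
  exact main_ind ends v Δ hdeg c hc.1 hc.2 (Finset.univ \ ∅).card ∅ le_rfl u hu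
end

section
/- Let G = (V,E) be a finite simple graph, let v ∈ V, and suppose all vertices of G except possibly v have degree at most Δ ∈ ℕ. Then the forest generating function Z_G(x) = Σ_{F ⊆ E : (V,F) is a forest} x^{|F|} satisfies Z_G(x) ≠ 0 for all complex x with |x| ≤ 1/(2Δ). -/
open Finset

attribute [local instance] Classical.propDecidable

set_option linter.unusedSectionVars false
set_option linter.unusedVariables false
set_option linter.unnecessarySimpa false

variable {V : Type} [Fintype V] [DecidableEq V]

/-- The forest generating function `Z_G(x) = Σ_{F ⊆ E, (V,F) forest} x^{|F|}`. -/
noncomputable def forestSum (G : SimpleGraph V) (x : ℂ) : ℂ :=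
  ∑ F ∈ G.edgeFinset.powerset.filter
      (fun (F : Finset (Sym2 V)) => (SimpleGraph.fromEdgeSet (↑F : Set (Sym2 V))).IsAcyclic), x ^ F.card

namespace FSum

/-- one-step relation: `a` and `b` joined by an edge of `B`. -/
def rel (B : Finset (Sym2 V)) (a b : V) : Prop := s(a,b) ∈ B ∧ a ≠ b

/-- reachability via edges of `B`. -/
def rch (B : Finset (Sym2 V)) (a b : V) : Prop := Relation.ReflTransGen (rel B) a b

lemma rel.symm' {B : Finset (Sym2 V)} {a b : V} (h : rel B a b) : rel B b a := by
  obtain ⟨h1, h2⟩ := h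
  exact ⟨by rwa [Sym2.eq_swap], h2.symm⟩

lemma rel_symmetric (B : Finset (Sym2 V)) : Symmetric (rel B) := fun _ _ h => h.symm'

lemma rch_refl {B : Finset (Sym2 V)} (a : V) : rch B a a := Relation.ReflTransGen.refl

lemma rch.symm {B : Finset (Sym2 V)} {a b : V} (h : rch B a b) : rch B b a :=
  by
    induction h with
    | refl => exact rch_refl _
    | tail _ hs ih => exact (Relation.ReflTransGen.single hs.symm').trans ih

lemma rch.trans {B : Finset (Sym2 V)} {a b c : V} (h : rch B a b) (h' : rch B b c) :
    rch B a c := Relation.ReflTransGen.trans h h'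

lemma rch_single {B : Finset (Sym2 V)} {a b : V} (h : s(a,b) ∈ B) (hne : a ≠ b) :
    rch B a b := Relation.ReflTransGen.single ⟨h, hne⟩

lemma rch_mono {B B' : Finset (Sym2 V)} (hBB : B ⊆ B') {a b : V} (h : rch B a b) :
    rch B' a b := by
  induction h with
  | refl => exact rch_refl a
  | tail _ hstep ih => exact ih.tail ⟨hBB hstep.1, hstep.2⟩

/-- key surgery lemma: reachability after inserting an edge. -/
lemma rch_insert_iff {B : Finset (Sym2 V)} {c d a b : V} :
    rch (insert s(c,d) B) a b ↔
      rch B a b ∨ (rch B a c ∧ rch B d b) ∨ (rch B a d ∧ rch B c b) := by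
  constructor
  · intro h
    induction h with
    | refl => exact Or.inl (rch_refl a)
    | tail _ hstep ih =>
      rename_i b' b _
      obtain ⟨hmem, hne⟩ := hstep
      rcases Finset.mem_insert.mp hmem with heq | hB
      · -- the step uses the new edge
        rcases Sym2.eq_iff.mp heq with ⟨rfl, rfl⟩ | ⟨rfl, rfl⟩
        · rcases ih with h1 | ⟨h1, h2⟩ | ⟨h1, h2⟩
          · exact Or.inr (Or.inl ⟨h1, rch_refl _⟩)
          · exact Or.inr (Or.inl ⟨h1, rch_refl _⟩)
          · exact Or.inl h1
        · rcases ih with h1 | ⟨h1, h2⟩ | ⟨h1, h2⟩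
          · exact Or.inr (Or.inr ⟨h1, rch_refl _⟩)
          · exact Or.inl h1
          · exact Or.inr (Or.inr ⟨h1, rch_refl _⟩)
      · -- step inside B
        rcases ih with h1 | ⟨h1, h2⟩ | ⟨h1, h2⟩
        · exact Or.inl (h1.tail ⟨hB, hne⟩)
        · exact Or.inr (Or.inl ⟨h1, h2.tail ⟨hB, hne⟩⟩)
        · exact Or.inr (Or.inr ⟨h1, h2.tail ⟨hB, hne⟩⟩)
  · intro h
    have hsub : B ⊆ insert s(c,d) B := Finset.subset_insert _ _
    rcases h with h1 | ⟨h1, h2⟩ | ⟨h1, h2⟩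
    · exact rch_mono hsub h1
    · by_cases hcd : c = d
      · subst hcd; exact (rch_mono hsub h1).trans (rch_mono hsub h2)
      · exact ((rch_mono hsub h1).tail ⟨Finset.mem_insert_self _ _, hcd⟩).trans
          (rch_mono hsub h2)
    · by_cases hcd : c = d
      · subst hcd; exact (rch_mono hsub h1).trans (rch_mono hsub h2)
      · have : s(d,c) ∈ insert s(c,d) B := by
          rw [Sym2.eq_swap]; exact Finset.mem_insert_self _ _
        exact ((rch_mono hsub h1).tail ⟨this, fun hh => hcd hh.symm⟩).trans
          (rch_mono hsub h2)

/-- `B` is a forest: every edge is a bridge. -/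
def Fst (B : Finset (Sym2 V)) : Prop :=
  ∀ a b : V, s(a,b) ∈ B → ¬ rch (B.erase s(a,b)) a b

lemma Fst.mono {B B' : Finset (Sym2 V)} (h : B' ⊆ B) (hB : Fst B) : Fst B' := by
  intro a b hab hr
  exact hB a b (h hab) (rch_mono (Finset.erase_subset_erase _ h) hr)

lemma fst_empty : Fst (∅ : Finset (Sym2 V)) := by
  intro a b hab
  simp at hab

/-- inserting a fresh edge `s(c,d)` keeps a forest iff `c,d` were not connected. -/
lemma fst_insert_iff {B : Finset (Sym2 V)} {c d : V} (hcd : c ≠ d)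
    (he : s(c,d) ∉ B) (hnd : ∀ e ∈ B, ¬ e.IsDiag) :
    Fst (insert s(c,d) B) ↔ Fst B ∧ ¬ rch B c d := by
  constructor
  · intro hF
    constructor
    · intro a b hab hr
      have hne : s(a,b) ≠ s(c,d) := by intro h; rw [h] at hab; exact he hab
      refine hF a b (Finset.mem_insert_of_mem hab) ?_
      have : (insert s(c,d) B).erase s(a,b) = insert s(c,d) (B.erase s(a,b)) := by
        rw [Finset.erase_insert_of_ne (fun h => hne h.symm)]
      rw [this]
      exact rch_mono (Finset.subset_insert _ _) hr
    · intro hr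
      refine hF c d (Finset.mem_insert_self _ _) ?_
      rw [Finset.erase_insert he]
      exact hr
  · rintro ⟨hF, hncd⟩ a b hab hr
    rcases Finset.mem_insert.mp hab with heq | hB
    · -- the edge is the new one
      rw [heq, Finset.erase_insert he] at hr
      rcases Sym2.eq_iff.mp heq with ⟨rfl, rfl⟩ | ⟨rfl, rfl⟩
      · exact hncd hr
      · exact hncd hr.symm
    · have hab' : a ≠ b := by
        intro h; subst h
        exact hnd _ hB (Sym2.isDiag_iff_proj_eq.mpr rfl)
      have hne : s(a,b) ≠ s(c,d) := by rintro heq; rw [heq] at hB; exact he hB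
      have : (insert s(c,d) B).erase s(a,b) = insert s(c,d) (B.erase s(a,b)) := by
        rw [Finset.erase_insert_of_ne (fun h => hne h.symm)]
      rw [this, rch_insert_iff] at hr
      rcases hr with h1 | ⟨h1, h2⟩ | ⟨h1, h2⟩
      · exact hF a b hB h1
      · -- a→c, d→b in B∖ab; edge ab ∈ B: then c→d in B
        refine hncd ?_
        have hab2 : rch B a b := rch_single hB hab'
        have h1' : rch B a c := rch_mono (Finset.erase_subset _ _) h1
        have h2' : rch B d b := rch_mono (Finset.erase_subset _ _) h2
        exact (h1'.symm.trans hab2).trans h2'.symm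
      · refine hncd ?_
        have hab2 : rch B a b := rch_single hB hab'
        have h1' : rch B a d := rch_mono (Finset.erase_subset _ _) h1
        have h2' : rch B c b := rch_mono (Finset.erase_subset _ _) h2
        exact (h2'.trans hab2.symm).trans h1'

/-- existence of a first step: if `p` reaches `u ≠ p` in `B`, there is an edge `s(p,z) ∈ B`
with `z` reaching `u` avoiding that edge. -/
lemma exists_first_step : ∀ n (B : Finset (Sym2 V)), B.card ≤ n → ∀ {p u : V},
    rch B p u → p ≠ u →
    ∃ z, z ≠ p ∧ s(p,z) ∈ B ∧ rch (B.erase s(p,z)) z u := by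
  intro n
  induction n with
  | zero =>
    intro B hB p u hr hpu
    interval_cases h : B.card
    · rw [Finset.card_eq_zero] at h
      subst h
      -- no edges: rch only reflexive
      exfalso
      rcases Relation.ReflTransGen.cases_head hr with rfl | ⟨c, ⟨hc, _⟩, _⟩
      · exact hpu rfl
      · simp at hc
  | succ n ih =>
    intro B hB p u hr hpu
    rcases Relation.ReflTransGen.cases_head hr with rfl | ⟨c, ⟨hc, hpc⟩, hcu⟩
    · exact absurd rfl hpu
    · set e₁ := s(p,c) with he₁
      by_cases hgood : rch (B.erase e₁) c u
      · exact ⟨c, fun h => hpc h.symm, hc, hgood⟩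
      · -- walk from c to u must cross e₁; so p reaches u avoiding e₁
        have hBsplit : B = insert e₁ (B.erase e₁) := (Finset.insert_erase hc).symm
        have hcu' : rch (insert e₁ (B.erase e₁)) c u := by rw [← hBsplit]; exact hcu
        rw [rch_insert_iff] at hcu'
        have hpu' : rch (B.erase e₁) p u := by
          rcases hcu' with h1 | ⟨h1, h2⟩ | ⟨h1, h2⟩
          · exact absurd h1 hgood
          · exact absurd h2 hgood
          · exact h2
        have hcard : (B.erase e₁).card ≤ n := by
          have := Finset.card_erase_of_mem hc
          omega
        obtain ⟨z, hz1, hz2, hz3⟩ := ih (B.erase e₁) hcard hpu' hpu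
        refine ⟨z, hz1, Finset.mem_of_mem_erase hz2, ?_⟩
        exact rch_mono (Finset.erase_subset_erase _ (Finset.erase_subset _ _)) hz3

/-- separation: no two distinct vertices of `G` are connected in `F`. -/
def Sep (G : Finset V) (F : Finset (Sym2 V)) : Prop :=
  ∀ a ∈ G, ∀ b ∈ G, a ≠ b → ¬ rch F a b

lemma Sep.mono {G : Finset V} {F F' : Finset (Sym2 V)} (h : F' ⊆ F) (hs : Sep G F) :
    Sep G F' := fun a ha b hb hab hr => hs a ha b hb hab (rch_mono h hr)

lemma Sep.anti {G G' : Finset V} {F : Finset (Sym2 V)} (h : G' ⊆ G) (hs : Sep G F) :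
    Sep G' F := fun a ha b hb hab hr => hs a (h ha) b (h hb) hab hr

/-- "good first edge" predicate for the path decomposition. -/
def Good (U : Finset V) (F : Finset (Sym2 V)) (p z : V) : Prop :=
  z ≠ p ∧ s(p,z) ∈ F ∧ ∃ u ∈ U, rch (F.erase s(p,z)) z u

lemma good_exists {U : Finset V} {F : Finset (Sym2 V)} {p u : V}
    (hu : u ∈ U) (hr : rch F p u) (hp : p ∉ U) :
    ∃ z, Good U F p z := by
  have hpu : p ≠ u := fun h => hp (h ▸ hu)
  obtain ⟨z, hz1, hz2, hz3⟩ := exists_first_step F.card F le_rfl hr hpu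
  exact ⟨z, hz1, hz2, u, hu, hz3⟩

lemma good_unique {U : Finset V} {F : Finset (Sym2 V)} {p z₁ z₂ : V}
    (hF : Fst F) (hsep : Sep U F) (hp : p ∉ U)
    (h1 : Good U F p z₁) (h2 : Good U F p z₂) : z₁ = z₂ := by
  by_contra hne
  obtain ⟨hz1p, he1, u₁, hu₁, hr₁⟩ := h1
  obtain ⟨hz2p, he2, u₂, hu₂, hr₂⟩ := h2
  set e₁ := s(p,z₁) with he₁def
  set e₂ := s(p,z₂) with he₂def
  have hee : e₁ ≠ e₂ := by
    intro h
    rcases Sym2.eq_iff.mp h with ⟨_, h2⟩ | ⟨h1, _⟩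
    · exact hne h2
    · exact hz2p h1.symm
  -- p reaches u₁ and u₂ in F, so u₁ = u₂ by separation
  have hpu₁ : rch F p u₁ :=
    (rch_single he1 (fun h => hz1p h.symm)).trans (rch_mono (Finset.erase_subset _ _) hr₁)
  have hpu₂ : rch F p u₂ :=
    (rch_single he2 (fun h => hz2p h.symm)).trans (rch_mono (Finset.erase_subset _ _) hr₂)
  have huu : u₁ = u₂ := by
    by_contra huu
    exact hsep u₁ hu₁ u₂ hu₂ huu (hpu₁.symm.trans hpu₂)
  subst huu
  set u := u₁
  set F₀ := (F.erase e₁).erase e₂ with hF₀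
  have hmem2 : e₂ ∈ F.erase e₁ := Finset.mem_erase.mpr ⟨fun h => hee h.symm, he2⟩
  have hmem1 : e₁ ∈ F.erase e₂ := Finset.mem_erase.mpr ⟨hee, he1⟩
  have hsplit1 : F.erase e₁ = insert e₂ F₀ := (Finset.insert_erase hmem2).symm
  have hF₀' : F₀ = (F.erase e₂).erase e₁ := Finset.erase_right_comm
  have hsplit2 : F.erase e₂ = insert e₁ F₀ := by
    rw [hF₀', Finset.insert_erase hmem1]
  have hsub₀₁ : F₀ ⊆ F.erase e₁ := Finset.erase_subset _ _
  have hsub₀₂ : F₀ ⊆ F.erase e₂ := by rw [hF₀']; exact Finset.erase_subset _ _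
  have hFst1 := hF p z₁ he1   -- ¬ rch (F.erase e₁) p z₁
  have hFst2 := hF p z₂ he2
  have hr₁' : rch (insert e₂ F₀) z₁ u := by rw [← hsplit1]; exact hr₁
  rw [rch_insert_iff] at hr₁'
  rcases hr₁' with hA | ⟨hB1, hB2⟩ | ⟨hC1, hC2⟩
  · -- case A : rch F₀ z₁ u ; expand the second walk
    have hr₂' : rch (insert e₁ F₀) z₂ u := by rw [← hsplit2]; exact hr₂
    rw [rch_insert_iff] at hr₂'
    rcases hr₂' with hA' | ⟨hB1', hB2'⟩ | ⟨hC1', hC2'⟩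
    · -- p -e₂- z₂ → u ← z₁ within F.erase e₁
      refine hFst1 ?_
      have step : rch (F.erase e₁) p z₂ := rch_single hmem2 (fun h => hz2p h.symm)
      exact (step.trans (rch_mono hsub₀₁ hA')).trans (rch_mono hsub₀₁ hA).symm
    · -- z₂ → p in F₀ ⊆ F.erase e₂
      exact hFst2 ((rch_mono hsub₀₂ hB1').symm)
    · -- p → u → z₁ in F₀ ⊆ F.erase e₁
      refine hFst1 ?_
      exact (rch_mono hsub₀₁ hC2').trans (rch_mono hsub₀₁ hA).symm
  · -- case B : z₁ → p in F₀ ⊆ F.erase e₁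
    exact hFst1 ((rch_mono hsub₀₁ hB1).symm)
  · -- case C : rch F₀ z₁ z₂ and rch F₀ p u ; contradict Fst at e₂
    refine hFst2 ?_
    exact (rch_mono hsub₀₂ hC2).trans hr₂.symm

/-! ### degrees and neighbourhoods -/

def degB (B : Finset (Sym2 V)) (v : V) : ℕ := (B.filter (fun e => v ∈ e)).card

def nbrs (B : Finset (Sym2 V)) (p : V) : Finset V :=
  Finset.univ.filter (fun z => z ≠ p ∧ s(p,z) ∈ B)

lemma mem_nbrs {B : Finset (Sym2 V)} {p z : V} :
    z ∈ nbrs B p ↔ z ≠ p ∧ s(p,z) ∈ B := by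
  simp [nbrs]

lemma degB_mono {B B' : Finset (Sym2 V)} (h : B' ⊆ B) (v : V) : degB B' v ≤ degB B v :=
  Finset.card_le_card (Finset.filter_subset_filter _ h)

lemma card_nbrs_le_degB (B : Finset (Sym2 V)) (p : V) : (nbrs B p).card ≤ degB B p := by
  apply Finset.card_le_card_of_injOn (fun z => s(p,z))
  · intro z hz
    rw [Finset.mem_coe, mem_nbrs] at hz
    simp only [Finset.mem_coe, Finset.mem_filter]
    exact ⟨hz.2, Sym2.mem_mk_left p z⟩
  · intro z₁ h₁ z₂ h₂ heq
    rw [Finset.mem_coe, mem_nbrs] at h₁ h₂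
    rcases Sym2.eq_iff.mp heq with ⟨_, h⟩ | ⟨h, h'⟩
    · exact h
    · exact (h₁.1 h').elim

lemma degB_erase_succ_le {B : Finset (Sym2 V)} {e : Sym2 V} {v : V}
    (he : e ∈ B) (hv : v ∈ e) : degB (B.erase e) v + 1 ≤ degB B v := by
  have h1 : e ∈ B.filter (fun e => v ∈ e) := Finset.mem_filter.mpr ⟨he, hv⟩
  have h2 : (B.erase e).filter (fun e => v ∈ e) = (B.filter (fun e => v ∈ e)).erase e :=
    Finset.filter_erase _ _ _
  unfold degB
  rw [h2, Finset.card_erase_add_one h1]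

/-! ### the weighted sums -/

/-- event for `Zf`. -/
def Zev (G : Finset V) (F : Finset (Sym2 V)) : Prop := Fst F ∧ Sep G F

/-- event for `Cf`. -/
def Cev (U W : Finset V) (p : V) (F : Finset (Sym2 V)) : Prop :=
  Zev (U ∪ W) F ∧ ∃ u ∈ U, rch F p u

/-- `Zf x B G` : forest generating sum over subsets of `B` which are forests
with the vertices of `G` pairwise disconnected. -/
noncomputable def Zf (x : ℂ) (B : Finset (Sym2 V)) (G : Finset V) : ℂ :=
  ∑ F ∈ B.powerset.filter (Zev G), x ^ F.card

/-- `Cf x B U W p` : same, but restricted to forests where additionally `p`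
is connected to some vertex of `U` (separation is w.r.t. `U ∪ W`). -/
noncomputable def Cf (x : ℂ) (B : Finset (Sym2 V)) (U W : Finset V) (p : V) : ℂ :=
  ∑ F ∈ B.powerset.filter (Cev U W p), x ^ F.card

/-- generic split of a powerset sum along membership of a fixed element. -/
lemma sum_split (B : Finset (Sym2 V)) (e : Sym2 V) (he : e ∈ B)
    (P : Finset (Sym2 V) → Prop) (w : Finset (Sym2 V) → ℂ) :
    ∑ F ∈ B.powerset.filter P, w F
      = (∑ F ∈ (B.erase e).powerset.filter P, w F)
      + ∑ F ∈ (B.erase e).powerset.filter (fun F => P (insert e F)), w (insert e F) := by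
  classical
  rw [← Finset.sum_filter_add_sum_filter_not (B.powerset.filter P) (fun F => e ∈ F)]
  rw [add_comm]
  congr 1
  · -- F without e
    apply Finset.sum_congr _ (fun _ _ => rfl)
    ext F
    simp only [Finset.mem_filter, Finset.mem_powerset]
    constructor
    · rintro ⟨⟨hFB, hP⟩, heF⟩
      exact ⟨fun a ha => Finset.mem_erase.mpr ⟨fun h => heF (h ▸ ha), hFB ha⟩, hP⟩
    · rintro ⟨hFB, hP⟩
      refine ⟨⟨fun a ha => Finset.mem_of_mem_erase (hFB ha), hP⟩, fun heF => ?_⟩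
      exact (Finset.mem_erase.mp (hFB heF)).1 rfl
  · -- F with e : bijection with subsets of B.erase e
    apply Finset.sum_nbij' (fun F => F.erase e) (fun F => insert e F)
    · intro F hF
      simp only [Finset.mem_filter, Finset.mem_powerset] at hF ⊢
      obtain ⟨⟨hFB, hP⟩, heF⟩ := hF
      have : insert e (F.erase e) = F := Finset.insert_erase heF
      refine ⟨fun a ha => ?_, by rw [this]; exact hP⟩
      obtain ⟨hae, haF⟩ := Finset.mem_erase.mp ha
      exact Finset.mem_erase.mpr ⟨hae, hFB haF⟩
    · intro F hF
      simp only [Finset.mem_filter, Finset.mem_powerset] at hF ⊢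
      obtain ⟨hFB, hP⟩ := hF
      refine ⟨⟨Finset.insert_subset he (fun a ha => Finset.mem_of_mem_erase (hFB ha)), hP⟩,
        Finset.mem_insert_self _ _⟩
    · intro F hF
      simp only [Finset.mem_filter, Finset.mem_powerset] at hF
      exact Finset.insert_erase hF.2
    · intro F hF
      simp only [Finset.mem_filter, Finset.mem_powerset] at hF
      have heF : e ∉ F := fun h => (Finset.mem_erase.mp (hF.1 h)).1 rfl
      exact Finset.erase_insert heF
    · intro F hF
      simp only [Finset.mem_filter, Finset.mem_powerset] at hF
      rw [Finset.insert_erase hF.2]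
/-! ### identity lemmas -/

/-- event translation when inserting a boundary edge `s(t,w)`, `t ∈ G`, `w ∉ G`. -/
lemma event_insert {B : Finset (Sym2 V)} {G : Finset V} {t w : V}
    (ht : t ∈ G) (hw : w ∉ G) (hnd : ∀ e ∈ B, ¬ e.IsDiag)
    {F' : Finset (Sym2 V)} (hF'B : F' ⊆ B.erase s(t,w)) :
    Zev G (insert s(t,w) F') ↔ Zev (insert w G) F' := by
  have htw : t ≠ w := fun h => hw (h ▸ ht)
  have heF' : s(t,w) ∉ F' := fun h => (Finset.mem_erase.mp (hF'B h)).1 rfl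
  have hndF' : ∀ e ∈ F', ¬ e.IsDiag := fun e he =>
    hnd e (Finset.mem_of_mem_erase (hF'B he))
  unfold Zev
  constructor
  · rintro ⟨hF, hS⟩
    have hFst' : Fst F' := hF.mono (Finset.subset_insert _ _)
    have hntw : ¬ rch F' t w := by
      have := hF t w (Finset.mem_insert_self _ _)
      rwa [Finset.erase_insert heF'] at this
    refine ⟨hFst', ?_⟩
    intro a ha b hb hab hr
    have hsub : F' ⊆ insert s(t,w) F' := Finset.subset_insert _ _
    rcases Finset.mem_insert.mp ha with ha' | haG
    · subst ha'
      rcases Finset.mem_insert.mp hb with hb' | hbG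
      · exact hab hb'.symm
      · -- a = w , b ∈ G
        by_cases htb : t = b
        · exact hntw (htb ▸ hr.symm)
        · exact hS t ht b hbG htb
            ((rch_single (Finset.mem_insert_self _ _) htw).trans (rch_mono hsub hr))
    · rcases Finset.mem_insert.mp hb with hb' | hbG
      · subst hb'
        by_cases hta : t = a
        · exact hntw (hta ▸ hr)
        · exact hS a haG t ht (fun h => hta h.symm)
            ((rch_mono hsub hr).trans (rch_single (Finset.mem_insert_self _ _) htw).symm)
      · exact hS a haG b hbG hab (rch_mono hsub hr)
  · rintro ⟨hF', hS'⟩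
    have hntw : ¬ rch F' t w :=
      hS' t (Finset.mem_insert_of_mem ht) w (Finset.mem_insert_self _ _) htw
    constructor
    · rw [fst_insert_iff htw heF' hndF']
      exact ⟨hF', hntw⟩
    · intro a ha b hb hab hr
      rw [rch_insert_iff] at hr
      rcases hr with h1 | ⟨h1, h2⟩ | ⟨h1, h2⟩
      · exact hS' a (Finset.mem_insert_of_mem ha) b (Finset.mem_insert_of_mem hb) hab h1
      · have hwb : w ≠ b := fun h => hw (h ▸ hb)
        exact hS' w (Finset.mem_insert_self _ _) b (Finset.mem_insert_of_mem hb) hwb h2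
      · have haw : a ≠ w := fun h => hw (h ▸ ha)
        exact hS' a (Finset.mem_insert_of_mem ha) w (Finset.mem_insert_self _ _) haw h1

/-- (I-main): peeling a boundary edge. -/
lemma Z_split (x : ℂ) {B : Finset (Sym2 V)} {G : Finset V} {t w : V}
    (he : s(t,w) ∈ B) (ht : t ∈ G) (hw : w ∉ G) (hnd : ∀ e ∈ B, ¬ e.IsDiag) :
    Zf x B G = Zf x (B.erase s(t,w)) G
      + x * Zf x (B.erase s(t,w)) (insert w G) := by
  unfold Zf
  rw [sum_split B s(t,w) he (Zev G) (fun F => x ^ F.card)]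
  congr 1
  have hsets : (B.erase s(t,w)).powerset.filter (fun F => Zev G (insert s(t,w) F))
      = (B.erase s(t,w)).powerset.filter (Zev (insert w G)) := by
    ext F
    simp only [Finset.mem_filter, Finset.mem_powerset]
    constructor
    · rintro ⟨hFB, hP⟩
      exact ⟨hFB, (event_insert ht hw hnd hFB).mp hP⟩
    · rintro ⟨hFB, hP⟩
      exact ⟨hFB, (event_insert ht hw hnd hFB).mpr hP⟩
  rw [hsets, Finset.mul_sum]
  apply Finset.sum_congr rfl
  intro F hF
  simp only [Finset.mem_filter, Finset.mem_powerset] at hF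
  have heF : s(t,w) ∉ F := fun h => (Finset.mem_erase.mp (hF.1 h)).1 rfl
  rw [Finset.card_insert_of_notMem heF, pow_succ, mul_comm]

/-- (I-int): an edge internal to the group is never used. -/
lemma Z_int (x : ℂ) {B : Finset (Sym2 V)} {G : Finset V} {a b : V}
    (he : s(a,b) ∈ B) (ha : a ∈ G) (hb : b ∈ G) (hab : a ≠ b) :
    Zf x B G = Zf x (B.erase s(a,b)) G := by
  unfold Zf
  rw [sum_split B s(a,b) he (Zev G) (fun F => x ^ F.card)]
  have : ∀ F ∈ (B.erase s(a,b)).powerset, ¬ (Zev G (insert s(a,b) F)) := by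
    rintro F _ ⟨_, hS⟩
    exact hS a ha b hb hab (rch_single (Finset.mem_insert_self _ _) hab)
  rw [Finset.filter_false_of_mem this, Finset.sum_empty, add_zero]

/-- (I-ZC): adding a vertex to the group vs. the connection sum. -/
lemma Z_grow (x : ℂ) {B : Finset (Sym2 V)} {G : Finset V} {p : V} (hp : p ∉ G) :
    Zf x B G = Zf x B (insert p G) + Cf x B G ∅ p := by
  classical
  unfold Zf Cf
  rw [← Finset.sum_filter_add_sum_filter_not (B.powerset.filter (Zev G))
    (fun F => ∃ u ∈ G, rch F p u)]
  rw [add_comm]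
  congr 1
  · -- no connection ↔ bigger group
    apply Finset.sum_congr _ (fun _ _ => rfl)
    ext F
    simp only [Finset.mem_filter, Finset.mem_powerset]
    constructor
    · rintro ⟨⟨hFB, hF, hS⟩, hno⟩
      refine ⟨hFB, hF, ?_⟩
      intro a ha b hb hab hr
      rcases Finset.mem_insert.mp ha with ha' | haG
      · subst ha'
        rcases Finset.mem_insert.mp hb with hb' | hbG
        · exact hab hb'.symm
        · exact hno ⟨b, hbG, hr⟩
      · rcases Finset.mem_insert.mp hb with hb' | hbG
        · subst hb'
          exact hno ⟨a, haG, hr.symm⟩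
        · exact hS a haG b hbG hab hr
    · rintro ⟨hFB, hF, hS⟩
      refine ⟨⟨hFB, hF, hS.anti (Finset.subset_insert _ _)⟩, ?_⟩
      rintro ⟨u, huG, hr⟩
      exact hS p (Finset.mem_insert_self _ _) u (Finset.mem_insert_of_mem huG)
        (fun h => hp (h ▸ huG)) hr
  · -- connection part is Cf with W = ∅
    apply Finset.sum_congr _ (fun _ _ => rfl)
    ext F
    simp only [Finset.mem_filter, Finset.mem_powerset, Cev, Zev, Finset.union_empty]
    tauto

/-! ### the main recursion for the connection sum -/

lemma crec_fwd {B : Finset (Sym2 V)} {U W : Finset V} {p z : V}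
    (hpUW : p ∉ U ∪ W) {F : Finset (Sym2 V)} (hFB : F ⊆ B)
    (hev : Cev U W p F) (hgood : Good U F p z) :
    Cev U (insert p W) z (F.erase s(p,z)) := by
  obtain ⟨⟨hF, hS⟩, _⟩ := hev
  obtain ⟨hz, heF, u, hu, hrz⟩ := hgood
  have hepz : ¬ rch (F.erase s(p,z)) p z := hF p z heF
  have hUW : U ∪ insert p W = insert p (U ∪ W) := Finset.union_insert p U W
  refine ⟨⟨hF.mono (Finset.erase_subset _ _), ?_⟩, u, hu, hrz⟩
  rw [hUW]
  have key : ∀ g ∈ U ∪ W, ¬ rch (F.erase s(p,z)) p g := by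
    intro g hg hrpg
    by_cases hgu : g = u
    · subst hgu
      exact hepz (hrpg.trans hrz.symm)
    · have h1 : rch F g u := by
        refine ((rch_mono (Finset.erase_subset _ _) hrpg).symm.trans ?_)
        exact (rch_single heF (fun h => hz h.symm)).trans
          (rch_mono (Finset.erase_subset _ _) hrz)
      exact hS g hg u (Finset.mem_union_left _ hu) hgu h1
  intro a ha b hb hab hr
  rcases Finset.mem_insert.mp ha with ha' | haUW
  · subst ha'
    rcases Finset.mem_insert.mp hb with hb' | hbUW
    · exact hab hb'.symm
    · exact key b hbUW hr
  · rcases Finset.mem_insert.mp hb with hb' | hbUW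
    · subst hb'
      exact key a haUW hr.symm
    · exact hS a haUW b hbUW hab (rch_mono (Finset.erase_subset _ _) hr)

lemma crec_bwd {B : Finset (Sym2 V)} {U W : Finset V} {p z : V}
    (hpUW : p ∉ U ∪ W) (hz : z ≠ p) (hnd : ∀ e ∈ B, ¬ e.IsDiag)
    {F' : Finset (Sym2 V)} (hF'B : F' ⊆ B.erase s(p,z))
    (hev' : Cev U (insert p W) z F') :
    Cev U W p (insert s(p,z) F') ∧ Good U (insert s(p,z) F') p z := by
  obtain ⟨⟨hF', hS'⟩, u, hu, hrz⟩ := hev'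
  rw [Finset.union_insert] at hS'
  have heF' : s(p,z) ∉ F' := fun h => (Finset.mem_erase.mp (hF'B h)).1 rfl
  have hndF' : ∀ e ∈ F', ¬ e.IsDiag := fun e he =>
    hnd e (Finset.mem_of_mem_erase (hF'B he))
  have hpu : p ≠ u := fun h => hpUW (Finset.mem_union_left _ (h ▸ hu))
  have hnpz : ¬ rch F' p z := by
    intro h
    exact hS' p (Finset.mem_insert_self _ _) u
      (Finset.mem_insert_of_mem (Finset.mem_union_left _ hu)) hpu (h.trans hrz)
  have hFst : Fst (insert s(p,z) F') := by
    rw [fst_insert_iff (fun h => hz h.symm) heF' hndF']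
    exact ⟨hF', hnpz⟩
  have hSep : Sep (U ∪ W) (insert s(p,z) F') := by
    intro a ha b hb hab hr
    rw [rch_insert_iff] at hr
    rcases hr with h1 | ⟨h1, h2⟩ | ⟨h1, h2⟩
    · exact hS' a (Finset.mem_insert_of_mem ha) b (Finset.mem_insert_of_mem hb) hab h1
    · exact hS' a (Finset.mem_insert_of_mem ha) p (Finset.mem_insert_self _ _)
        (fun h => hpUW (h ▸ ha)) h1
    · exact hS' b (Finset.mem_insert_of_mem hb) p (Finset.mem_insert_self _ _)
        (fun h => hpUW (h ▸ hb)) h2.symm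
  refine ⟨⟨⟨hFst, hSep⟩, u, hu, ?_⟩, hz, Finset.mem_insert_self _ _, u, hu, ?_⟩
  · exact (rch_single (Finset.mem_insert_self _ _) (fun h => hz h.symm)).trans
      (rch_mono (Finset.subset_insert _ _) hrz)
  · rw [Finset.erase_insert heF']
    exact hrz

/-- (I-C-rec): decomposition of the connection sum along the first edge. -/
lemma C_rec (x : ℂ) {B : Finset (Sym2 V)} {U W : Finset V} {p : V}
    (hpUW : p ∉ U ∪ W) (hnd : ∀ e ∈ B, ¬ e.IsDiag) :
    Cf x B U W p = x * ∑ z ∈ nbrs B p, Cf x (B.erase s(p,z)) U (insert p W) z := by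
  classical
  have hpU : p ∉ U := fun h => hpUW (Finset.mem_union_left _ h)
  -- step 1: rewrite each summand via the unique good z
  have step1 : Cf x B U W p
      = ∑ F ∈ B.powerset.filter (Cev U W p),
          ∑ z ∈ nbrs B p, (if Good U F p z then x ^ F.card else 0) := by
    unfold Cf
    apply Finset.sum_congr rfl
    intro F hF
    simp only [Finset.mem_filter, Finset.mem_powerset] at hF
    obtain ⟨hFB, hev⟩ := hF
    obtain ⟨⟨hFst, hSep⟩, u, hu, hr⟩ := hev
    obtain ⟨z₀, hg₀⟩ := good_exists hu hr hpU
    have hz₀mem : z₀ ∈ nbrs B p := mem_nbrs.mpr ⟨hg₀.1, hFB hg₀.2.1⟩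
    have huniq : ∀ z, Good U F p z → z = z₀ := by
      intro z hg
      exact good_unique hFst (Sep.anti Finset.subset_union_left hSep) hpU hg hg₀
    rw [Finset.sum_eq_single_of_mem z₀ hz₀mem]
    · rw [if_pos hg₀]
    · intro z _ hzne
      exact if_neg (fun hg => hzne (huniq z hg))
  rw [step1, Finset.sum_comm]
  -- step 2: per z, sum over F with good z equals x * Cf on the smaller edge set
  rw [Finset.mul_sum]
  apply Finset.sum_congr rfl
  intro z hzmem
  obtain ⟨hzp, hzB⟩ := mem_nbrs.mp hzmem
  rw [← Finset.sum_filter]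
  have hbij : ∑ F ∈ (B.powerset.filter (Cev U W p)).filter (fun F => Good U F p z),
        x ^ F.card
      = ∑ F' ∈ (B.erase s(p,z)).powerset.filter (Cev U (insert p W) z),
          x * x ^ F'.card := by
    apply Finset.sum_nbij' (i := fun F => F.erase s(p,z)) (j := fun F' => insert s(p,z) F')
    · intro F hF
      simp only [Finset.mem_filter, Finset.mem_powerset] at hF ⊢
      obtain ⟨⟨hFB, hev⟩, hgood⟩ := hF
      exact ⟨Finset.erase_subset_erase _ hFB, crec_fwd hpUW hFB hev hgood⟩
    · intro F' hF'
      simp only [Finset.mem_filter, Finset.mem_powerset] at hF' ⊢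
      obtain ⟨hF'B, hev'⟩ := hF'
      obtain ⟨hev, hgood⟩ := crec_bwd hpUW hzp hnd hF'B hev'
      exact ⟨⟨Finset.insert_subset hzB (hF'B.trans (Finset.erase_subset _ _)), hev⟩, hgood⟩
    · intro F hF
      simp only [Finset.mem_filter, Finset.mem_powerset] at hF
      exact Finset.insert_erase hF.2.2.1
    · intro F' hF'
      simp only [Finset.mem_filter, Finset.mem_powerset] at hF'
      have heF' : s(p,z) ∉ F' := fun h => (Finset.mem_erase.mp (hF'.1 h)).1 rfl
      exact Finset.erase_insert heF'
    · intro F hF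
      simp only [Finset.mem_filter, Finset.mem_powerset] at hF
      have heF : s(p,z) ∈ F := hF.2.2.1
      rw [← Finset.card_erase_add_one heF, pow_succ, mul_comm]
  rw [hbij]
  unfold Cf
  rw [Finset.mul_sum]

/-! ### small helpers -/

lemma Zf_empty (x : ℂ) (G : Finset V) : Zf x (∅ : Finset (Sym2 V)) G = 1 := by
  unfold Zf
  rw [Finset.powerset_empty]
  rw [Finset.filter_singleton]
  have hev : Zev G (∅ : Finset (Sym2 V)) := by
    refine ⟨fst_empty, ?_⟩
    intro a _ b _ hab hr
    rcases Relation.ReflTransGen.cases_head hr with h | ⟨c, ⟨hc, _⟩, _⟩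
    · exact hab h
    · simp at hc
  rw [if_pos hev, Finset.sum_singleton, Finset.card_empty, pow_zero]

lemma Cf_eq_Zf_of_mem (x : ℂ) {B : Finset (Sym2 V)} {U W : Finset V} {z : V}
    (hz : z ∈ U) : Cf x B U W z = Zf x B (U ∪ W) := by
  unfold Cf Zf
  apply Finset.sum_congr _ (fun _ _ => rfl)
  ext F
  simp only [Finset.mem_filter, Finset.mem_powerset]
  constructor
  · rintro ⟨hFB, hev, _⟩
    exact ⟨hFB, hev⟩
  · rintro ⟨hFB, hev⟩
    exact ⟨hFB, hev, z, hz, rch_refl z⟩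

lemma Cf_eq_zero_of_mem_right (x : ℂ) {B : Finset (Sym2 V)} {U W : Finset V} {z : V}
    (hzW : z ∈ W) (hzU : z ∉ U) : Cf x B U W z = 0 := by
  unfold Cf
  rw [Finset.filter_false_of_mem, Finset.sum_empty]
  rintro F _ ⟨⟨_, hS⟩, u, hu, hr⟩
  exact hS z (Finset.mem_union_right _ hzW) u (Finset.mem_union_left _ hu)
    (fun h => hzU (h ▸ hu)) hr

lemma Cf_eq_zero_of_deg_zero (x : ℂ) {B : Finset (Sym2 V)} {U W : Finset V} {p : V}
    (hpUW : p ∉ U ∪ W) (hnd : ∀ e ∈ B, ¬ e.IsDiag) (hdeg : degB B p = 0) :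
    Cf x B U W p = 0 := by
  rw [C_rec x hpUW hnd]
  have : nbrs B p = ∅ := by
    rw [Finset.eq_empty_iff_forall_notMem]
    intro z hz
    obtain ⟨_, hzB⟩ := mem_nbrs.mp hz
    have : s(p,z) ∈ B.filter (fun e => p ∈ e) :=
      Finset.mem_filter.mpr ⟨hzB, Sym2.mem_mk_left _ _⟩
    have hpos := Finset.card_pos.mpr ⟨_, this⟩
    unfold degB at hdeg
    omega
  rw [this, Finset.sum_empty, mul_zero]

lemma Sep_singleton (a : V) (F : Finset (Sym2 V)) : Sep {a} F := by
  intro u hu v hv huv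
  rw [Finset.mem_singleton] at hu hv
  exact (huv (hu.trans hv.symm)).elim

lemma Sep_of_untouched {G : Finset V} {F : Finset (Sym2 V)}
    (h : ∀ e ∈ F, ∀ v ∈ G, v ∉ e) : Sep G F := by
  intro a ha b hb hab hr
  rcases Relation.ReflTransGen.cases_head hr with heq | ⟨c, ⟨hc, _⟩, _⟩
  · exact hab heq
  · exact h _ hc a ha (Sym2.mem_mk_left _ _)

lemma Zf_group_switch (x : ℂ) {B : Finset (Sym2 V)} {G : Finset V} (a : V)
    (h : ∀ e ∈ B, ∀ v ∈ G, v ∉ e) : Zf x B G = Zf x B {a} := by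
  unfold Zf
  apply Finset.sum_congr _ (fun _ _ => rfl)
  ext F
  simp only [Finset.mem_filter, Finset.mem_powerset]
  constructor
  · rintro ⟨hFB, hF, _⟩
    exact ⟨hFB, hF, Sep_singleton a F⟩
  · rintro ⟨hFB, hF, _⟩
    exact ⟨hFB, hF, Sep_of_untouched (fun e he v hv => h e (hFB he) v hv)⟩

lemma degB_eq_zero_of_untouched {B : Finset (Sym2 V)} {v : V}
    (h : ∀ e ∈ B, v ∉ e) : degB B v = 0 := by
  unfold degB
  rw [Finset.card_eq_zero, Finset.filter_false_of_mem]
  intro e he hv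
  exact h e he hv


lemma cabs_sub_le (a b : ℂ) : ‖a - b‖ ≤ ‖a‖ + ‖b‖ := by
  simpa using norm_sub_le a b

lemma cabs_neg (a : ℂ) : ‖-a‖ = ‖a‖ := by
  simpa using norm_neg a

/-! ### the master induction -/

theorem master (Δ : ℕ) (x : ℂ) (hx : 2 * (Δ:ℝ) * ‖x‖ ≤ 1) :
    ∀ n : ℕ, ∀ B : Finset (Sym2 V), B.card ≤ n → (∀ e ∈ B, ¬ e.IsDiag) →
      ((∀ G : Finset V, (∀ w, w ∉ G → degB B w ≤ Δ) → Zf x B G ≠ 0) ∧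
       (∀ U W : Finset V, ∀ p : V, p ∉ U ∪ W →
          (∀ w, w ∉ U ∪ W → w ≠ p → degB B w ≤ Δ) → degB B p < Δ →
          ‖Cf x B U W p‖ ≤ ‖Zf x B (U ∪ W)‖)) := by
  intro n
  induction n with
  | zero =>
    intro B hcard hnd
    have hB : B = ∅ := Finset.card_eq_zero.mp (Nat.le_zero.mp hcard)
    subst hB
    constructor
    · intro G _
      rw [Zf_empty]
      exact one_ne_zero
    · intro U W p hpUW _ _
      rw [Cf_eq_zero_of_deg_zero x (B := ∅) hpUW (by simp) (by simp [degB])]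
      simp
  | succ n ih =>
    intro B hcard hnd
    have hs0 : (0:ℝ) ≤ ‖x‖ := norm_nonneg x
    set s : ℝ := ‖x‖ with hsdef
    -- ================= the X-bound =================
    have hX : ∀ U W : Finset V, ∀ p : V, p ∉ U ∪ W →
        (∀ w, w ∉ U ∪ W → w ≠ p → degB B w ≤ Δ) → degB B p < Δ →
        ‖Cf x B U W p‖
          ≤ s * Δ * ‖Zf x B (insert p (U ∪ W))‖ := by
      intro U W p hpUW hdegs hdegp
      have hUiW : U ∪ insert p W = insert p (U ∪ W) := Finset.union_insert p U W
      -- bound each C-term by the corresponding Z-term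
      have hzC : ∀ z ∈ nbrs B p, ‖Cf x (B.erase s(p,z)) U (insert p W) z‖
          ≤ ‖Zf x (B.erase s(p,z)) (insert p (U ∪ W))‖ := by
        intro z hz
        obtain ⟨hzp, hzB⟩ := mem_nbrs.mp hz
        by_cases hzU : z ∈ U
        · rw [Cf_eq_Zf_of_mem x hzU, hUiW]
        · by_cases hzW : z ∈ insert p W
          · rw [Cf_eq_zero_of_mem_right x hzW hzU]
            simp
          · have hzG' : z ∉ U ∪ W := by
              intro h
              rcases Finset.mem_union.mp h with h' | h'
              · exact hzU h'
              · exact hzW (Finset.mem_insert_of_mem h')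
            have hcard' : (B.erase s(p,z)).card ≤ n := by
              have := Finset.card_erase_of_mem hzB
              omega
            have hnd' : ∀ e ∈ B.erase s(p,z), ¬ e.IsDiag :=
              fun e he => hnd e (Finset.mem_of_mem_erase he)
            have hz1 : z ∉ U ∪ insert p W := by
              rw [hUiW]
              intro h
              rcases Finset.mem_insert.mp h with h' | h'
              · exact hzp h'
              · exact hzG' h'
            have hz2 : ∀ w, w ∉ U ∪ insert p W → w ≠ z → degB (B.erase s(p,z)) w ≤ Δ := by
              intro w hw hwz
              rw [hUiW] at hw
              have hwp : w ≠ p := fun h => hw (h ▸ Finset.mem_insert_self _ _)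
              have hwG : w ∉ U ∪ W := fun h => hw (Finset.mem_insert_of_mem h)
              exact le_trans (degB_mono (Finset.erase_subset _ _) w) (hdegs w hwG hwp)
            have hz3 : degB (B.erase s(p,z)) z < Δ := by
              have h1 := degB_erase_succ_le hzB (Sym2.mem_mk_right p z)
              have h2 := hdegs z hzG' hzp
              omega
            have h := (ih (B.erase s(p,z)) hcard' hnd').2 U (insert p W) z hz1 hz2 hz3
            rwa [hUiW] at h
      -- bound each Z-term on the smaller edge set
      have hzZ : ∀ z ∈ nbrs B p,
          ((Δ:ℝ) - 1) * ‖Zf x (B.erase s(p,z)) (insert p (U ∪ W))‖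
            ≤ (Δ:ℝ) * ‖Zf x B (insert p (U ∪ W))‖ := by
        intro z hz
        obtain ⟨hzp, hzB⟩ := mem_nbrs.mp hz
        set H := insert p (U ∪ W) with hHdef
        have hpH : p ∈ H := Finset.mem_insert_self _ _
        have hZnnB := norm_nonneg (Zf x B H)
        by_cases hzH : z ∈ H
        · have heq : Zf x B H = Zf x (B.erase s(p,z)) H :=
            Z_int x hzB hpH hzH (fun h => hzp h.symm)
          rw [← heq]
          nlinarith [norm_nonneg (Zf x B H)]
        · set B' := B.erase s(p,z) with hB'def
          have hcard' : B'.card ≤ n := by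
            have h9 : B'.card = B.card - 1 := Finset.card_erase_of_mem hzB
            have h10 : 0 < B.card := Finset.card_pos.mpr ⟨_, hzB⟩
            omega
          have hnd' : ∀ e ∈ B', ¬ e.IsDiag :=
            fun e he => hnd e (Finset.mem_of_mem_erase he)
          have hsplit : Zf x B H = Zf x B' H + x * Zf x B' (insert z H) :=
            Z_split x hzB hpH hzH hnd
          have hgrow : Zf x B' H = Zf x B' (insert z H) + Cf x B' H ∅ z :=
            Z_grow x hzH
          -- ih (P2) at (B', H, ∅, z)
          have hzUW : z ∉ U ∪ W := fun h => hzH (Finset.mem_insert_of_mem h)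
          have hCb : ‖Cf x B' H ∅ z‖ ≤ ‖Zf x B' H‖ := by
            have h1 : z ∉ H ∪ ∅ := by rwa [Finset.union_empty]
            have h2 : ∀ w, w ∉ H ∪ ∅ → w ≠ z → degB B' w ≤ Δ := by
              intro w hw hwz
              rw [Finset.union_empty] at hw
              have hwp : w ≠ p := fun h => hw (h ▸ hpH)
              have hwG : w ∉ U ∪ W := fun h => hw (Finset.mem_insert_of_mem h)
              exact le_trans (degB_mono (Finset.erase_subset _ _) w) (hdegs w hwG hwp)
            have h3 : degB B' z < Δ := by
              have h4 : degB B' z + 1 ≤ degB B z := degB_erase_succ_le hzB (Sym2.mem_mk_right p z)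
              have h5 := hdegs z hzUW hzp
              omega
            have h := (ih B' hcard' hnd').2 H ∅ z h1 h2 h3
            rwa [Finset.union_empty] at h
          have htri : ‖Zf x B' (insert z H)‖
              ≤ 2 * ‖Zf x B' H‖ := by
            have heq : Zf x B' (insert z H) = Zf x B' H - Cf x B' H ∅ z := by
              rw [hgrow]; ring
            rw [heq]
            calc ‖Zf x B' H - Cf x B' H ∅ z‖
                ≤ ‖Zf x B' H‖ + ‖Cf x B' H ∅ z‖ :=
                  cabs_sub_le _ _
              _ ≤ 2 * ‖Zf x B' H‖ := by linarith
          have hlow : (1 - 2*s) * ‖Zf x B' H‖ ≤ ‖Zf x B H‖ := by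
            have heq : Zf x B' H = Zf x B H - x * Zf x B' (insert z H) := by
              rw [hsplit]; ring
            have h1 : ‖Zf x B' H‖
                ≤ ‖Zf x B H‖ + s * ‖Zf x B' (insert z H)‖ := by
              rw [heq]
              calc ‖Zf x B H - x * Zf x B' (insert z H)‖
                  ≤ ‖Zf x B H‖ + ‖x * Zf x B' (insert z H)‖ :=
                    cabs_sub_le _ _
                _ = ‖Zf x B H‖ + s * ‖Zf x B' (insert z H)‖ := by
                    rw [norm_mul]
            nlinarith [norm_nonneg (Zf x B' H)]
          -- combine
          have hΔs : (Δ:ℝ) * (2*s) ≤ 1 := by linarith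
          nlinarith [norm_nonneg (Zf x B' H), norm_nonneg (Zf x B H),
            Nat.cast_nonneg (α := ℝ) Δ]
      -- sum the Z-term bounds
      have hsum : ∑ z ∈ nbrs B p,
          ‖Zf x (B.erase s(p,z)) (insert p (U ∪ W))‖
            ≤ (Δ:ℝ) * ‖Zf x B (insert p (U ∪ W))‖ := by
        rcases Finset.eq_empty_or_nonempty (nbrs B p) with hemp | hne
        · rw [hemp, Finset.sum_empty]
          positivity
        · obtain ⟨z₀, hz₀⟩ := hne
          have hΔ2 : 2 ≤ Δ := by
            obtain ⟨hzp, hzB⟩ := mem_nbrs.mp hz₀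
            have h1 : 0 < degB B p := Finset.card_pos.mpr
              ⟨s(p,z₀), Finset.mem_filter.mpr ⟨hzB, Sym2.mem_mk_left _ _⟩⟩
            omega
          have hΔ2' : (2:ℝ) ≤ (Δ:ℝ) := by exact_mod_cast hΔ2
          have hcardle : ((nbrs B p).card : ℝ) ≤ (Δ:ℝ) - 1 := by
            have h1 := card_nbrs_le_degB B p
            have h2 : (nbrs B p).card + 1 ≤ Δ := by omega
            have := (Nat.cast_le (α := ℝ)).mpr h2
            push_cast at this
            linarith
          have h1 : ((Δ:ℝ) - 1) * ∑ z ∈ nbrs B p,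
              ‖Zf x (B.erase s(p,z)) (insert p (U ∪ W))‖
              ≤ ((nbrs B p).card : ℝ) * ((Δ:ℝ) * ‖Zf x B (insert p (U ∪ W))‖) := by
            rw [Finset.mul_sum]
            calc ∑ z ∈ nbrs B p, ((Δ:ℝ) - 1) *
                  ‖Zf x (B.erase s(p,z)) (insert p (U ∪ W))‖
                ≤ ∑ _z ∈ nbrs B p, (Δ:ℝ) * ‖Zf x B (insert p (U ∪ W))‖ :=
                  Finset.sum_le_sum hzZ
              _ = ((nbrs B p).card : ℝ) * ((Δ:ℝ) * ‖Zf x B (insert p (U ∪ W))‖) := by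
                  rw [Finset.sum_const, nsmul_eq_mul]
          have h2 : ((nbrs B p).card:ℝ) * ((Δ:ℝ) * ‖Zf x B (insert p (U ∪ W))‖)
              ≤ ((Δ:ℝ) - 1) * ((Δ:ℝ) * ‖Zf x B (insert p (U ∪ W))‖) := by
            apply mul_le_mul_of_nonneg_right hcardle
            positivity
          have h4 : (0:ℝ) < (Δ:ℝ) - 1 := by linarith
          exact le_of_mul_le_mul_left (le_trans h1 h2) h4
      -- assemble the X-bound
      rw [C_rec x hpUW hnd]
      rw [norm_mul]
      calc s * ‖∑ z ∈ nbrs B p, Cf x (B.erase s(p,z)) U (insert p W) z‖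
          ≤ s * ∑ z ∈ nbrs B p, ‖Cf x (B.erase s(p,z)) U (insert p W) z‖ := by
            have := norm_sum_le (nbrs B p)
              (fun z => Cf x (B.erase s(p,z)) U (insert p W) z)
            nlinarith [this]
        _ ≤ s * ∑ z ∈ nbrs B p, ‖Zf x (B.erase s(p,z)) (insert p (U ∪ W))‖ := by
            have := Finset.sum_le_sum hzC
            nlinarith [this]
        _ ≤ s * ((Δ:ℝ) * ‖Zf x B (insert p (U ∪ W))‖) := by nlinarith [hsum]
        _ = s * Δ * ‖Zf x B (insert p (U ∪ W))‖ := by ring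
    -- ================= (P2) at B =================
    have hP2 : ∀ U W : Finset V, ∀ p : V, p ∉ U ∪ W →
        (∀ w, w ∉ U ∪ W → w ≠ p → degB B w ≤ Δ) → degB B p < Δ →
        ‖Cf x B U W p‖ ≤ ‖Zf x B (U ∪ W)‖ := by
      intro U W p hpUW hdegs hdegp
      have hsΔ : s * (Δ:ℝ) ≤ 1/2 := by nlinarith [hx, mul_comm s (Δ:ℝ)]
      -- the c₀ bound
      have hdegs' : ∀ w, w ∉ (U ∪ W) ∪ (∅ : Finset V) → w ≠ p → degB B w ≤ Δ := by
        intro w hw hwp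
        rw [Finset.union_empty] at hw
        exact hdegs w hw hwp
      have hXG := hX (U ∪ W) ∅ p (by rwa [Finset.union_empty]) hdegs' hdegp
      rw [Finset.union_empty] at hXG
      have hgrow : Zf x B (U ∪ W) = Zf x B (insert p (U ∪ W)) + Cf x B (U ∪ W) ∅ p :=
        Z_grow x hpUW
      have htri : ‖Zf x B (insert p (U ∪ W))‖
          ≤ ‖Zf x B (U ∪ W)‖ + ‖Cf x B (U ∪ W) ∅ p‖ := by
        have heq : Zf x B (insert p (U ∪ W)) = Zf x B (U ∪ W) - Cf x B (U ∪ W) ∅ p := by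
          rw [hgrow]; ring
        rw [heq]
        exact cabs_sub_le _ _
      have hZHnn := norm_nonneg (Zf x B (insert p (U ∪ W)))
      have h5 : s * ↑Δ * ‖Zf x B (insert p (U ∪ W))‖
          ≤ (1/2) * ‖Zf x B (insert p (U ∪ W))‖ :=
        mul_le_mul_of_nonneg_right hsΔ hZHnn
      have hc0 : ‖Cf x B (U ∪ W) ∅ p‖ ≤ ‖Zf x B (U ∪ W)‖ := by
        linarith [hXG, htri, h5]
      have hfin := hX U W p hpUW hdegs hdegp
      linarith [hfin, h5, htri, hc0]
    refine ⟨?_, hP2⟩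
    -- ================= (P1) at B =================
    intro G hdegG
    by_cases hBe : B = ∅
    · subst hBe
      rw [Zf_empty]
      exact one_ne_zero
    -- the key step for a boundary edge
    have key : ∀ (G₁ : Finset V) (t w : V), s(t,w) ∈ B → t ∈ G₁ → w ∉ G₁ →
        (∀ v, v ∉ G₁ → degB B v ≤ Δ) → Zf x B G₁ ≠ 0 := by
      intro G₁ t w he ht hw hdeg₁
      set B' := B.erase s(t,w) with hB'def
      have hcard' : B'.card ≤ n := by
        have h9 : B'.card = B.card - 1 := Finset.card_erase_of_mem he
        have h10 : 0 < B.card := Finset.card_pos.mpr ⟨_, he⟩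
        omega
      have hnd' : ∀ e ∈ B', ¬ e.IsDiag := fun e h => hnd e (Finset.mem_of_mem_erase h)
      have hdeg' : ∀ v, v ∉ G₁ → degB B' v ≤ Δ :=
        fun v hv => le_trans (degB_mono (Finset.erase_subset _ _) v) (hdeg₁ v hv)
      have hZ' : Zf x B' G₁ ≠ 0 := (ih B' hcard' hnd').1 G₁ hdeg'
      have hZ'pos : 0 < ‖Zf x B' G₁‖ := norm_pos_iff.mpr hZ'
      have hwdeg : 0 < degB B w := Finset.card_pos.mpr
        ⟨s(t,w), Finset.mem_filter.mpr ⟨he, Sym2.mem_mk_right t w⟩⟩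
      have hΔ1 : 1 ≤ Δ := le_trans hwdeg (hdeg₁ w hw)
      have hsplit : Zf x B G₁ = Zf x B' G₁ + x * Zf x B' (insert w G₁) :=
        Z_split x he ht hw hnd
      have hgrow : Zf x B' G₁ = Zf x B' (insert w G₁) + Cf x B' G₁ ∅ w :=
        Z_grow x hw
      have hdegw' : degB B' w < Δ := by
        have h1 : degB B' w + 1 ≤ degB B w := degB_erase_succ_le he (Sym2.mem_mk_right t w)
        have h2 := hdeg₁ w hw
        omega
      by_cases hΔ2 : 2 ≤ Δ
      · have hC : ‖Cf x B' G₁ ∅ w‖ ≤ ‖Zf x B' G₁‖ := by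
          have h1 : w ∉ G₁ ∪ (∅ : Finset V) := by rwa [Finset.union_empty]
          have h2 : ∀ v, v ∉ G₁ ∪ (∅ : Finset V) → v ≠ w → degB B' v ≤ Δ := by
            intro v hv _
            rw [Finset.union_empty] at hv
            exact hdeg' v hv
          have h := (ih B' hcard' hnd').2 G₁ ∅ w h1 h2 hdegw'
          rwa [Finset.union_empty] at h
        have htri : ‖Zf x B' (insert w G₁)‖
            ≤ 2 * ‖Zf x B' G₁‖ := by
          have heq : Zf x B' (insert w G₁) = Zf x B' G₁ - Cf x B' G₁ ∅ w := by
            rw [hgrow]; ring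
          rw [heq]
          calc ‖Zf x B' G₁ - Cf x B' G₁ ∅ w‖
              ≤ ‖Zf x B' G₁‖ + ‖Cf x B' G₁ ∅ w‖ :=
                cabs_sub_le _ _
            _ ≤ 2 * ‖Zf x B' G₁‖ := by linarith
        intro h0
        have heq : Zf x B' G₁ = - (x * Zf x B' (insert w G₁)) := by
          rw [h0] at hsplit
          linear_combination -hsplit
        have habs : ‖Zf x B' G₁‖ = s * ‖Zf x B' (insert w G₁)‖ := by
          rw [heq, cabs_neg, norm_mul]
        have hΔ2' : (2:ℝ) ≤ (Δ:ℝ) := by exact_mod_cast hΔ2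
        nlinarith [norm_nonneg (Zf x B' (insert w G₁))]
      · -- Δ = 1
        have hΔeq : Δ = 1 := by omega
        have hdw0 : degB B' w = 0 := by omega
        have hC0 : Cf x B' G₁ ∅ w = 0 :=
          Cf_eq_zero_of_deg_zero x (by rwa [Finset.union_empty]) hnd' hdw0
        have hzi : Zf x B' (insert w G₁) = Zf x B' G₁ := by
          rw [hgrow, hC0, add_zero]
        rw [hzi] at hsplit
        intro h0
        have heq : Zf x B' G₁ * (1 + x) = 0 := by
          rw [h0] at hsplit
          linear_combination -hsplit
        rcases mul_eq_zero.mp heq with h | h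
        · exact hZ' h
        · have h1 : ‖1 + x‖ = 0 := by rw [h]; simp
          have h2 : (1:ℝ) ≤ ‖1 + x‖ + s := by
            have h3 := cabs_sub_le (1 + x) x
            simpa using h3
          have hs12 : s ≤ 1/2 := by
            rw [hΔeq] at hx
            push_cast at hx
            linarith
          linarith
    -- case analysis on the edges of B
    by_cases hbd : ∃ t w, s(t,w) ∈ B ∧ t ∈ G ∧ w ∉ G
    · obtain ⟨t, w, he, ht, hw⟩ := hbd
      exact key G t w he ht hw hdegG
    · by_cases hint : ∃ a b, s(a,b) ∈ B ∧ a ∈ G ∧ b ∈ G ∧ a ≠ b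
      · obtain ⟨a, b, he, ha, hb, hab⟩ := hint
        rw [Z_int x he ha hb hab]
        have hcard' : (B.erase s(a,b)).card ≤ n := by
          have := Finset.card_erase_of_mem he
          omega
        have hnd' : ∀ e ∈ B.erase s(a,b), ¬ e.IsDiag :=
          fun e h => hnd e (Finset.mem_of_mem_erase h)
        exact (ih _ hcard' hnd').1 G
          (fun v hv => le_trans (degB_mono (Finset.erase_subset _ _) v) (hdegG v hv))
      · -- no edge of B touches G
        have huntouched : ∀ e ∈ B, ∀ v ∈ G, v ∉ e := by
          intro e heB v hv hve
          obtain ⟨z, rfl⟩ := Sym2.mem_iff_exists.mp hve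
          have hvz : v ≠ z := by
            intro h
            exact hnd _ heB (by rw [← h]; exact Sym2.isDiag_iff_proj_eq.mpr rfl)
          by_cases hzG : z ∈ G
          · exact hint ⟨v, z, heB, hv, hzG, hvz⟩
          · exact hbd ⟨v, z, heB, hv, hzG⟩
        obtain ⟨e₀, he₀⟩ := Finset.nonempty_iff_ne_empty.mpr hBe
        obtain ⟨⟨a, b⟩, hab⟩ := Quot.exists_rep e₀
        have he₀' : s(a,b) ∈ B := by rw [← hab] at he₀; exact he₀
        have habne : a ≠ b := by
          intro h
          exact hnd _ he₀' (by rw [← h]; exact Sym2.isDiag_iff_proj_eq.mpr rfl)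
        rw [Zf_group_switch x a huntouched]
        apply key {a} a b he₀' (Finset.mem_singleton_self a)
          (by rw [Finset.mem_singleton]; exact fun h => habne h.symm)
        intro v hv
        by_cases hvG : v ∈ G
        · rw [degB_eq_zero_of_untouched (fun e he => huntouched e he v hvG)]
          exact Nat.zero_le Δ
        · exact hdegG v hvG

/-! ### bridge to `SimpleGraph` notions -/

lemma rch_iff_reachable {F : Finset (Sym2 V)} {a b : V} :
    rch F a b ↔ (SimpleGraph.fromEdgeSet (↑F : Set (Sym2 V))).Reachable a b := by
  rw [SimpleGraph.reachable_iff_reflTransGen]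
  constructor
  · refine fun h => Relation.ReflTransGen.mono (fun u w h => ?_) a b h
    exact (SimpleGraph.fromEdgeSet_adj _).mpr ⟨Finset.mem_coe.mpr h.1, h.2⟩
  · refine fun h => Relation.ReflTransGen.mono (fun u w h => ?_) a b h
    obtain ⟨h1, h2⟩ := (SimpleGraph.fromEdgeSet_adj _).mp h
    exact ⟨Finset.mem_coe.mp h1, h2⟩

lemma del_graph_eq {F : Finset (Sym2 V)} {a b : V} :
    (SimpleGraph.fromEdgeSet (↑F : Set (Sym2 V)) \ SimpleGraph.fromEdgeSet {s(a,b)})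
      = SimpleGraph.fromEdgeSet (↑(F.erase s(a,b)) : Set (Sym2 V)) := by
  ext u v
  simp only [SimpleGraph.sdiff_adj, SimpleGraph.fromEdgeSet_adj, Finset.coe_erase,
    Set.mem_diff, Set.mem_singleton_iff, Finset.mem_coe]
  tauto

lemma isAcyclic_iff_fst {F : Finset (Sym2 V)} (hnd : ∀ e ∈ F, ¬ e.IsDiag) :
    (SimpleGraph.fromEdgeSet (↑F : Set (Sym2 V))).IsAcyclic ↔ Fst F := by
  rw [SimpleGraph.isAcyclic_iff_forall_adj_isBridge]
  constructor
  · intro h a b hab hr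
    have hne : a ≠ b := by
      intro heq
      exact hnd _ hab (by rw [← heq] at hab ⊢; exact Sym2.isDiag_iff_proj_eq.mpr rfl)
    have hadj : (SimpleGraph.fromEdgeSet (↑F : Set (Sym2 V))).Adj a b :=
      (SimpleGraph.fromEdgeSet_adj _).mpr ⟨Finset.mem_coe.mpr hab, hne⟩
    have hnr := SimpleGraph.isBridge_iff.mp (h hadj)
    apply hnr
    rw [SimpleGraph.deleteEdges, del_graph_eq]
    exact rch_iff_reachable.mp hr
  · intro hF u v hadj
    obtain ⟨h1, h2⟩ := (SimpleGraph.fromEdgeSet_adj _).mp hadj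
    rw [SimpleGraph.isBridge_iff]
    rw [SimpleGraph.deleteEdges, del_graph_eq]
    intro hr
    exact hF u v (Finset.mem_coe.mp h1) (rch_iff_reachable.mpr hr)

lemma degB_edgeFinset (G : SimpleGraph V) [DecidableRel G.Adj] (v : V) :
    degB G.edgeFinset v = G.degree v := by
  rw [← SimpleGraph.card_incidenceFinset_eq_degree]
  unfold degB
  congr 1
  rw [SimpleGraph.incidenceFinset_eq_filter]

end FSum

open FSum in
/-- main bridge : `forestSum` equals `Zf` with singleton group. -/
lemma forestSum_eq_Zf (G : SimpleGraph V) (x : ℂ) (v : V) :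
    (∑ F ∈ G.edgeFinset.powerset.filter
        (fun (F : Finset (Sym2 V)) =>
          (SimpleGraph.fromEdgeSet (↑F : Set (Sym2 V))).IsAcyclic), x ^ F.card)
      = Zf x G.edgeFinset {v} := by
  unfold Zf
  apply Finset.sum_congr _ (fun _ _ => rfl)
  ext F
  simp only [Finset.mem_filter, Finset.mem_powerset]
  constructor
  · rintro ⟨hFB, hac⟩
    have hnd : ∀ e ∈ F, ¬ e.IsDiag := fun e he =>
      (SimpleGraph.not_isDiag_of_mem_edgeSet G (SimpleGraph.mem_edgeFinset.mp (hFB he)))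
    exact ⟨hFB, (isAcyclic_iff_fst hnd).mp hac, Sep_singleton v F⟩
  · rintro ⟨hFB, hFst, _⟩
    have hnd : ∀ e ∈ F, ¬ e.IsDiag := fun e he =>
      (SimpleGraph.not_isDiag_of_mem_edgeSet G (SimpleGraph.mem_edgeFinset.mp (hFB he)))
    exact ⟨hFB, (isAcyclic_iff_fst hnd).mpr hFst⟩

/-- Theorem 1.3: if all vertices of `G`, except possibly `v`, have degree at most `Δ`,
then `Z_G(x) ≠ 0` whenever `|x| ≤ 1/(2Δ)`. -/
theorem forestSum_ne_zero (G : SimpleGraph V) (v : V) (Δ : ℕ)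
    (hdeg : ∀ w : V, w ≠ v → G.degree w ≤ Δ)
    (x : ℂ) (hx : ‖x‖ ≤ 1 / (2 * Δ)) :
    forestSum G x ≠ 0 := by
  classical
  have key := forestSum_eq_Zf G x v
  unfold forestSum
  rw [key]
  have hx' : 2 * (Δ:ℝ) * ‖x‖ ≤ 1 := by
    rcases Nat.eq_zero_or_pos Δ with hΔ | hΔ
    · subst hΔ
      simp
    · have hΔR : (0:ℝ) < (Δ:ℝ) := by exact_mod_cast hΔ
      have h2 : (0:ℝ) < 2 * (Δ:ℝ) := by linarith
      rw [le_div_iff₀ h2] at hx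
      linarith [hx]
  have hnd : ∀ e ∈ G.edgeFinset, ¬ e.IsDiag := fun e he =>
    SimpleGraph.not_isDiag_of_mem_edgeSet G (SimpleGraph.mem_edgeFinset.mp he)
  refine (FSum.master Δ x hx' G.edgeFinset.card G.edgeFinset le_rfl hnd).1 {v} ?_
  intro w hw
  rw [FSum.degB_edgeFinset]
  exact hdeg w (by simpa using hw)
end

section
/- Let G = (V,E) be a finite multigraph and let e = uv ∈ E. Then Z_G(x) = Z_{G/e}(x) + Σ_{P ∈ 𝓟_{G,u,v}} x^{|P|} Z_{G/P}(x), where Z_H(x) is the forest generating function of H, G/e is the multigraph obtained by contracting e (keeping parallel edges and loops), G/P is obtained by contracting the path P, and 𝓟_{G,u,v} is the set of paths from u to v in G. -/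
open Finset

attribute [local instance] Classical.propDecidable

variable {V E : Type} [Fintype V] [Fintype E] [DecidableEq V] [DecidableEq E]

/-- `F` contains a cycle (a loop, a pair of parallel edges, or a longer cycle). -/
def HasCycle (ends : E → Sym2 V) (F : Finset E) : Prop :=
  ∃ es : List E, es ≠ [] ∧ es.Nodup ∧ (∀ e ∈ es, e ∈ F) ∧
    ∃ vs : List V, chainOk ends vs es ∧ vs.head? = vs.getLast? ∧ vs.dropLast.Nodup

/-- The forest (acyclic edge subset) generating function of the multigraph with
edge-end map `ends`, restricted to edges outside `D` (the deleted/contracted edges). -/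
noncomputable def ZmultOn (ends : E → Sym2 V) (D : Finset E) (x : ℝ) : ℝ :=
  ∑ F ∈ (Finset.univ \ D).powerset.filter (fun F => ¬ HasCycle ends F), x ^ F.card

/-- The forest generating function `Z_G(x)` of a multigraph. -/
noncomputable def Zmult (ends : E → Sym2 V) (x : ℝ) : ℝ :=
  ZmultOn ends ∅ x

set_option linter.unusedSectionVars false
set_option linter.unusedVariables false
set_option maxHeartbeats 1600000

namespace ZC

def FW (ends : E → Sym2 V) (n : ℕ) (vf : ℕ → V) (ef : ℕ → E) : Prop :=
  ∀ i, i < n → ends (ef i) = s(vf i, vf (i+1))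

def CyF (ends : E → Sym2 V) (F : Finset E) (n : ℕ) (vf : ℕ → V) (ef : ℕ → E) : Prop :=
  1 ≤ n ∧ FW ends n vf ef ∧ (∀ i, i < n → ef i ∈ F) ∧ vf 0 = vf n ∧
  (∀ i j, i < n → j < n → vf i = vf j → i = j) ∧
  (∀ i j, i < n → j < n → ef i = ef j → i = j)

def PaF (ends : E → Sym2 V) (u v : V) (n : ℕ) (vf : ℕ → V) (ef : ℕ → E) : Prop :=
  FW ends n vf ef ∧ (∀ i j, i ≤ n → j ≤ n → vf i = vf j → i = j) ∧ vf 0 = u ∧ vf n = v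

variable {ends : E → Sym2 V} {F P : Finset E} {u v : V}

lemma ofFn_cons {α : Type*} (n : ℕ) (f : ℕ → α) :
    (List.range (n+1)).map f = f 0 :: (List.range n).map (fun i => f (i+1)) := by
  rw [List.range_succ_eq_map]
  simp [List.map_map, Function.comp, Nat.succ_eq_add_one]

lemma chainOk_ofFn {n : ℕ} {vf : ℕ → V} {ef : ℕ → E} (h : FW ends n vf ef) :
    chainOk ends ((List.range (n+1)).map vf) ((List.range n).map ef) := by
  induction n generalizing vf ef with
  | zero => simp [chainOk, List.range_succ]
  | succ n ih =>
    rw [ofFn_cons (n+1) vf, ofFn_cons n (fun i => vf (i+1)), ofFn_cons n ef]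
    refine ⟨h 0 (Nat.succ_pos n), ?_⟩
    have := ih (vf := fun i => vf (i+1)) (ef := fun i => ef (i+1))
      (fun i hi => h (i+1) (by omega))
    rw [ofFn_cons n (fun i => vf (i+1))] at this
    exact this

lemma nodup_ofFn {α : Type*} {k : ℕ} {f : ℕ → α} (h : ∀ i j, i < k → j < k → f i = f j → i = j) :
    ((List.range k).map f).Nodup := by
  rw [List.nodup_map_iff_inj_on (List.nodup_range (n := k))]
  intro i hi j hj hij
  exact h i j (List.mem_range.mp hi) (List.mem_range.mp hj) hij

lemma chainOk_toFn (dV : V) (dE : E) :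
    ∀ (es : List E) (vs : List V), chainOk ends vs es →
    vs.length = es.length + 1 ∧
      FW ends es.length (fun i => vs.getD i dV) (fun i => es.getD i dE) := by
  intro es
  induction es with
  | nil =>
    intro vs h
    match vs with
    | [] => exact absurd h (by simp [chainOk])
    | [a] => simp [FW]
    | a :: b :: vs => exact absurd h (by simp [chainOk])
  | cons e es ih =>
    intro vs h
    match vs with
    | [] => exact absurd h (by simp [chainOk])
    | [a] => exact absurd h (by simp [chainOk])
    | a :: b :: vs =>
      obtain ⟨h1, h2⟩ := h
      obtain ⟨hl, hw⟩ := ih (b :: vs) h2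
      constructor
      · simpa using hl
      · intro i hi
        cases i with
        | zero => simpa using h1
        | succ i =>
          have := hw i (by simpa using hi)
          simpa using this


lemma getD_inj {α : Type*} {l : List α} (h : l.Nodup) {d : α} {i j : ℕ}
    (hi : i < l.length) (hj : j < l.length) (hij : l.getD i d = l.getD j d) : i = j := by
  rw [List.getD_eq_getElem _ _ hi, List.getD_eq_getElem _ _ hj] at hij
  have h2 : (⟨i, hi⟩ : Fin l.length) = ⟨j, hj⟩ :=
    List.nodup_iff_injective_getElem.mp h hij
  exact congrArg Fin.val h2

lemma head?_ofFn (n : ℕ) (vf : ℕ → V) :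
    ((List.range (n+1)).map vf).head? = some (vf 0) := by
  rw [ofFn_cons]; rfl

lemma getLast?_ofFn (n : ℕ) (vf : ℕ → V) :
    ((List.range (n+1)).map vf).getLast? = some (vf n) := by
  rw [List.range_succ]; simp

lemma dropLast_ofFn (n : ℕ) (vf : ℕ → V) :
    ((List.range (n+1)).map vf).dropLast = (List.range n).map vf := by
  rw [List.range_succ]; simp

lemma hasCycle_of_fn {n vf ef} (h : CyF ends F n vf ef) : HasCycle ends F := by
  obtain ⟨hn, hfw, hF, hcl, hvi, hei⟩ := h
  refine ⟨(List.range n).map ef, by simp [List.range_eq_nil]; omega, nodup_ofFn hei,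
    ?_, (List.range (n+1)).map vf, chainOk_ofFn hfw, ?_, ?_⟩
  · intro g hg
    obtain ⟨i, hi, rfl⟩ := List.mem_map.mp hg
    exact hF i (List.mem_range.mp hi)
  · rw [head?_ofFn, getLast?_ofFn, hcl]
  · rw [dropLast_ofFn]
    exact nodup_ofFn hvi

lemma fn_of_hasCycle (h : HasCycle ends F) : ∃ n vf ef, CyF ends F n vf ef := by
  obtain ⟨es, hne, hnd, hmem, vs, hch, hhl, hdl⟩ := h
  have hvne : vs ≠ [] := by intro h0; rw [h0] at hch; cases es <;> simp [chainOk] at hch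
  obtain ⟨hlen, hfw⟩ := chainOk_toFn (vs.getLast hvne) (es.head hne) es vs hch
  have hnpos : 0 < es.length := List.length_pos_iff.mpr hne
  refine ⟨es.length, _, _, hnpos, hfw, ?_, ?_, ?_, ?_⟩
  · intro i hi
    rw [List.getD_eq_getElem _ _ (by omega)]
    exact hmem _ (List.getElem_mem _)
  · have h0 : vs.head? = some (vs.getD 0 (vs.getLast hvne)) := by
      rw [List.head?_eq_getElem?, List.getElem?_eq_getElem (by omega),
        List.getD_eq_getElem _ _ (by omega)]
    have h1 : vs.getLast? = some (vs.getD es.length (vs.getLast hvne)) := by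
      have hidx : vs.length - 1 = es.length := by omega
      rw [List.getLast?_eq_getElem?, hidx, List.getElem?_eq_getElem (by omega),
        List.getD_eq_getElem _ _ (by omega)]
    rw [h0, h1] at hhl
    exact Option.some.inj hhl
  · intro i j hi hj hij
    have hdli : i < vs.dropLast.length := by rw [List.length_dropLast]; omega
    have hdlj : j < vs.dropLast.length := by rw [List.length_dropLast]; omega
    have h2 : vs.dropLast.getD i (vs.getLast hvne) = vs.dropLast.getD j (vs.getLast hvne) := by
      rw [List.getD_eq_getElem _ _ hdli, List.getD_eq_getElem _ _ hdlj,
        List.getElem_dropLast, List.getElem_dropLast]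
      rw [List.getD_eq_getElem _ _ (show i < vs.length by omega),
        List.getD_eq_getElem _ _ (show j < vs.length by omega)] at hij
      exact hij
    exact getD_inj hdl hdli hdlj h2
  · intro i j hi hj hij
    exact getD_inj hnd (by omega) (by omega) hij

lemma path_edge_inj {n vf ef} (hfw : FW ends n vf ef)
    (hvi : ∀ i j, i ≤ n → j ≤ n → vf i = vf j → i = j) :
    ∀ i j, i < n → j < n → ef i = ef j → i = j := by
  intro i j hi hj hij
  have h1 := hfw i hi
  have h2 := hfw j hj
  rw [hij, h2] at h1
  rw [Sym2.eq_iff] at h1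
  rcases h1 with ⟨ha, _⟩ | ⟨ha, hb⟩
  · exact (hvi j i (by omega) (by omega) ha).symm
  · have e1 := hvi j (i+1) (by omega) (by omega) ha
    have e2 := hvi (j+1) i (by omega) (by omega) hb
    omega

lemma isPathSet_of_fn {n vf ef} (h : PaF ends u v n vf ef)
    (hP : ∀ i, i < n → ef i ∈ P) (hP2 : ∀ g ∈ P, ∃ i, i < n ∧ ef i = g) :
    IsPathSet ends u v P := by
  obtain ⟨hfw, hvi, h0, hn⟩ := h
  have hei := path_edge_inj hfw hvi
  refine ⟨(List.range n).map ef, nodup_ofFn hei, ?_, (List.range (n+1)).map vf,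
    nodup_ofFn (fun i j hi hj => hvi i j (by omega) (by omega)), ?_, ?_, chainOk_ofFn hfw⟩
  · ext g
    simp only [List.mem_toFinset, List.mem_map, List.mem_range]
    constructor
    · rintro ⟨i, hi, rfl⟩; exact hP i hi
    · intro hg; obtain ⟨i, hi, he⟩ := hP2 g hg; exact ⟨i, hi, he⟩
  · rw [List.range_succ_eq_map]; simp [h0]
  · rw [List.range_succ]; simp [hn]

lemma fn_of_isPathSet (dE : E) (h : IsPathSet ends u v P) :
    ∃ n vf ef, PaF ends u v n vf ef ∧ (∀ i, i < n → ef i ∈ P) ∧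
      (∀ g ∈ P, ∃ i, i < n ∧ ef i = g) ∧ P.card = n := by
  obtain ⟨es, hnd, hfin, vs, hvnd, hh, hl, hch⟩ := h
  have hvne : vs ≠ [] := by intro h0; rw [h0] at hch; cases es <;> simp [chainOk] at hch
  obtain ⟨hlen, hfw⟩ := chainOk_toFn (vs.getLast hvne) dE es vs hch
  refine ⟨es.length, _, _, ⟨hfw, ?_, ?_, ?_⟩, ?_, ?_, ?_⟩
  · intro i j hi hj hij
    exact getD_inj hvnd (by omega) (by omega) hij
  · have h0 : vs.head? = some (vs.getD 0 (vs.getLast hvne)) := by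
      rw [List.head?_eq_getElem?, List.getElem?_eq_getElem (by omega),
        List.getD_eq_getElem _ _ (by omega)]
    rw [h0] at hh
    exact Option.some.inj hh
  · have h1 : vs.getLast? = some (vs.getD es.length (vs.getLast hvne)) := by
      have hidx : vs.length - 1 = es.length := by omega
      rw [List.getLast?_eq_getElem?, hidx, List.getElem?_eq_getElem (by omega),
        List.getD_eq_getElem _ _ (by omega)]
    rw [h1] at hl
    exact Option.some.inj hl
  · intro i hi
    rw [List.getD_eq_getElem _ _ (by omega), ← hfin]
    exact List.mem_toFinset.mpr (List.getElem_mem _)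
  · intro g hg
    rw [← hfin] at hg
    obtain ⟨i, hi, he⟩ := List.mem_iff_getElem.mp (List.mem_toFinset.mp hg)
    exact ⟨i, by omega, by rw [List.getD_eq_getElem _ _ (by omega)]; exact he⟩
  · rw [← hfin, List.card_toFinset, hnd.dedup]

lemma hasCycle_mono {F F' : Finset E} (h : HasCycle ends F) (hs : F ⊆ F') : HasCycle ends F' := by
  obtain ⟨es, h1, h2, h3, rest⟩ := h
  exact ⟨es, h1, h2, fun e he => hs (h3 e he), rest⟩

lemma FW.rev {n vf ef} (h : FW ends n vf ef) :
    FW ends n (fun i => vf (n - i)) (fun i => ef (n - 1 - i)) := by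
  intro i hi
  have h1 := h (n-1-i) (by omega)
  rw [show n-1-i+1 = n-i by omega] at h1
  simp only []
  rw [h1, show n-(i+1) = n-1-i by omega]
  exact Sym2.eq_swap

lemma mod_cast_inj {n t i j : ℕ} (hi : i < n) (hj : j < n)
    (h : (t + i) % n = (t + j) % n) : i = j := by
  have h2 : i % n = j % n := Nat.ModEq.add_left_cancel' t h
  rwa [Nat.mod_eq_of_lt hi, Nat.mod_eq_of_lt hj] at h2

lemma mod_succ_eq {n a : ℕ} (hn : 1 ≤ n) : (a + 1) % n = (a % n + 1) % n := by
  conv_lhs => rw [Nat.add_mod]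
  rcases Nat.lt_or_ge 1 n with h | h
  · rw [Nat.mod_eq_of_lt h]
  · have hn1 : n = 1 := by omega
    subst hn1; simp

lemma CyF.rotate {n vf ef} (h : CyF ends F n vf ef) (t : ℕ) (ht : t < n) :
    CyF ends F n (fun i => vf ((t+i) % n)) (fun i => ef ((t+i) % n)) := by
  obtain ⟨hn, hfw, hF, hcl, hvi, hei⟩ := h
  have hstep : ∀ a, vf ((a+1) % n) = vf (a % n + 1) := by
    intro a
    rw [mod_succ_eq hn]
    rcases Nat.lt_or_ge (a % n + 1) n with h1 | h1
    · rw [Nat.mod_eq_of_lt h1]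
    · have h2 : a % n + 1 = n := by have := Nat.mod_lt a (show 0 < n by omega); omega
      rw [h2, Nat.mod_self, hcl]
  refine ⟨hn, ?_, ?_, ?_, ?_, ?_⟩
  · intro i hi
    have h1 := hfw ((t+i) % n) (Nat.mod_lt _ (by omega))
    simp only []
    rw [show t + (i+1) = (t+i) + 1 by omega, hstep (t+i)]
    exact h1
  · intro i hi
    exact hF _ (Nat.mod_lt _ (by omega))
  · simp only []
    rw [show t + n = t % n + n by rw [Nat.mod_eq_of_lt ht], Nat.add_mod_right,
      Nat.mod_eq_of_lt ht, Nat.add_zero, Nat.mod_eq_of_lt ht]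
  · intro i j hi hj hij
    exact mod_cast_inj hi hj
      (hvi _ _ (Nat.mod_lt _ (by omega)) (Nat.mod_lt _ (by omega)) hij)
  · intro i j hi hj hij
    exact mod_cast_inj hi hj
      (hei _ _ (Nat.mod_lt _ (by omega)) (Nat.mod_lt _ (by omega)) hij)

lemma closedWalk_hasCycle : ∀ n (vf : ℕ → V) (ef : ℕ → E), 1 ≤ n → FW ends n vf ef →
    (∀ i, i < n → ef i ∈ F) → vf 0 = vf n →
    (∀ i j, i < n → j < n → ef i = ef j → i = j) → HasCycle ends F := by
  intro n
  induction n using Nat.strong_induction_on with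
  | _ n IH =>
  intro vf ef hn hfw hF hcl hei
  by_cases hinj : ∀ i j, i < n → j < n → vf i = vf j → i = j
  · exact hasCycle_of_fn ⟨hn, hfw, hF, hcl, hinj, hei⟩
  · push_neg at hinj
    obtain ⟨i, j, hi, hj, hij, hne⟩ := hinj
    have key : ∀ a b, a < b → b < n → vf a = vf b → HasCycle ends F := by
      intro a b hab hbn hvab
      refine IH (b - a) (by omega) (fun k => vf (a+k)) (fun k => ef (a+k)) (by omega)
        (fun k hk => hfw (a+k) (by omega)) (fun k hk => hF (a+k) (by omega)) ?_
        (fun k l hk hl h => by have := hei (a+k) (a+l) (by omega) (by omega) h; omega)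
      simp only [Nat.add_zero]
      rw [show a + (b - a) = b by omega]
      exact hvab
    rcases Nat.lt_or_ge i j with hlt | hge
    · exact key i j hlt hj hij
    · exact key j i (by omega) hi hij.symm

lemma loopyWalk_hasCycle : ∀ n (vf : ℕ → V) (ef : ℕ → E), FW ends n vf ef →
    vf 0 = vf n → (∀ i j, i < n → j < n → ef i = ef j → i = j) →
    (∀ i, i < n → ef i ∈ F ∨ vf i = vf (i+1)) →
    (∃ i, i < n ∧ ef i ∈ F) → HasCycle ends F := by
  intro n
  induction n using Nat.strong_induction_on with
  | _ n IH =>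
  intro vf ef hfw hcl hei hlp hex
  obtain ⟨iw, hiw, hiwF⟩ := hex
  by_cases hall : ∀ i, i < n → ef i ∈ F
  · exact closedWalk_hasCycle n vf ef (by omega) hfw hall hcl hei
  · push_neg at hall
    obtain ⟨i0, hi0, hi0F⟩ := hall
    have hloop : vf i0 = vf (i0+1) := (hlp i0 hi0).resolve_left hi0F
    have hiwne : iw ≠ i0 := fun h0 => hi0F (h0 ▸ hiwF)
    have hn2 : 2 ≤ n := by omega
    have hvf'j : ∀ j, i0 ≤ j → (if j ≤ i0 then vf j else vf (j+1)) = vf (j+1) := by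
      intro j hj
      rcases Nat.eq_or_lt_of_le hj with h | h
      · rw [if_pos (show j ≤ i0 by omega), ← h]
        exact hloop
      · rw [if_neg (show ¬ j ≤ i0 by omega)]
    refine IH (n-1) (by omega) (fun j => if j ≤ i0 then vf j else vf (j+1))
      (fun j => if j < i0 then ef j else ef (j+1)) ?_ ?_ ?_ ?_ ?_
    · intro j hj
      simp only []
      rcases Nat.lt_or_ge j i0 with h | h
      · rw [if_pos h, if_pos (show j ≤ i0 by omega), if_pos (show j+1 ≤ i0 by omega)]
        exact hfw j (by omega)
      · rw [if_neg (show ¬ j < i0 by omega), hvf'j j h, hvf'j (j+1) (by omega)]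
        exact hfw (j+1) (by omega)
    · rw [if_pos (show (0:ℕ) ≤ i0 by omega), hvf'j (n-1) (by omega),
        show n-1+1 = n by omega]
      exact hcl
    · intro j k hj hk hjk
      rcases Nat.lt_or_ge j i0 with h1 | h1 <;> rcases Nat.lt_or_ge k i0 with h2 | h2
      · rw [if_pos h1, if_pos h2] at hjk
        exact hei j k (by omega) (by omega) hjk
      · rw [if_pos h1, if_neg (show ¬ k < i0 by omega)] at hjk
        have := hei j (k+1) (by omega) (by omega) hjk
        omega
      · rw [if_neg (show ¬ j < i0 by omega), if_pos h2] at hjk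
        have := hei (j+1) k (by omega) (by omega) hjk
        omega
      · rw [if_neg (show ¬ j < i0 by omega), if_neg (show ¬ k < i0 by omega)] at hjk
        have := hei (j+1) (k+1) (by omega) (by omega) hjk
        omega
    · intro j hj
      rcases Nat.lt_or_ge j i0 with h | h
      · rw [if_pos h, if_pos (show j ≤ i0 by omega)]
        rcases hlp j (by omega) with hF1 | hL
        · exact Or.inl hF1
        · right
          rw [if_pos (show j+1 ≤ i0 by omega)]
          exact hL
      · rw [if_neg (show ¬ j < i0 by omega), hvf'j j h, hvf'j (j+1) (by omega)]
        rcases hlp (j+1) (by omega) with hF1 | hL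
        · exact Or.inl hF1
        · exact Or.inr hL
    · rcases Nat.lt_or_ge iw i0 with h | h
      · refine ⟨iw, by omega, ?_⟩
        show (if iw < i0 then ef iw else ef (iw+1)) ∈ F
        rw [if_pos h]
        exact hiwF
      · refine ⟨iw - 1, by omega, ?_⟩
        rw [if_neg (show ¬ iw - 1 < i0 by omega), show iw - 1 + 1 = iw by omega]
        exact hiwF

lemma PaF.rev {n vf ef} (h : PaF ends u v n vf ef) :
    PaF ends v u n (fun i => vf (n - i)) (fun i => ef (n - 1 - i)) := by
  obtain ⟨hfw, hvi, h0, hn⟩ := h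
  refine ⟨hfw.rev, ?_, by simp [hn], by simp [h0]⟩
  intro i j hi hj hij
  have := hvi (n-i) (n-j) (by omega) (by omega) hij
  omega

/-- closing a path with an extra edge gives a cycle -/
lemma path_close {n pv pe} {e : E} (hp : PaF ends u v n pv pe) (he : ends e = s(u, v))
    (hne : ∀ i, i < n → pe i ≠ e) (hPF : ∀ i, i < n → pe i ∈ F) (heF : e ∈ F) :
    HasCycle ends F := by
  obtain ⟨hfw, hvi, h0, hn⟩ := hp
  apply hasCycle_of_fn (n := n+1) (vf := fun i => if i = n+1 then u else pv i)
    (ef := fun i => if i = n then e else pe i)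
  refine ⟨by omega, ?_, ?_, ?_, ?_, ?_⟩
  · intro i hi
    simp only []
    rcases Nat.lt_or_ge i n with h | h
    · rw [if_neg (show i ≠ n by omega), if_neg (show i ≠ n+1 by omega),
        if_neg (show i+1 ≠ n+1 by omega)]
      exact hfw i h
    · have hin : i = n := by omega
      subst hin
      rw [if_pos rfl, if_neg (show i ≠ i+1 by omega), if_pos rfl, he, hn]
      exact Sym2.eq_swap
  · intro i hi
    simp only []
    rcases eq_or_ne i n with h | h
    · rw [if_pos h]; exact heF
    · rw [if_neg h]; exact hPF i (by omega)
  · show (if (0:ℕ) = n+1 then u else pv 0) = if n+1 = n+1 then u else pv (n+1)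
    rw [if_neg (show (0:ℕ) ≠ n+1 by omega), if_pos rfl, h0]
  · intro i j hi hj hij
    simp only [if_neg (show i ≠ n+1 by omega), if_neg (show j ≠ n+1 by omega)] at hij
    exact hvi i j (by omega) (by omega) hij
  · intro i j hi hj hij
    simp only [] at hij
    rcases eq_or_ne i n with h1 | h1 <;> rcases eq_or_ne j n with h2 | h2
    · omega
    · rw [if_pos h1, if_neg h2] at hij
      exact absurd hij.symm (hne j (by omega))
    · rw [if_neg h1, if_pos h2] at hij
      exact absurd hij (hne i (by omega))
    · rw [if_neg h1, if_neg h2] at hij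
      exact path_edge_inj hfw hvi i j (by omega) (by omega) hij

/-- a cycle through an edge e = uv, minus e, gives a u-v path -/
lemma cycle_to_path {e : E} (huv : u ≠ v) (he : ends e = s(u, v))
    (h : HasCycle ends (F ∪ {e})) (hnc : ¬ HasCycle ends F) (heF : e ∉ F) :
    ∃ Q : Finset E, Q ⊆ F ∧ IsPathSet ends u v Q := by
  obtain ⟨n, vf0, ef0, hcy⟩ := fn_of_hasCycle h
  have hex : ∃ i0, i0 < n ∧ ef0 i0 = e := by
    by_contra hcon
    push_neg at hcon
    refine hnc (hasCycle_of_fn ⟨hcy.1, hcy.2.1, ?_, hcy.2.2.2⟩)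
    intro i hi
    rcases Finset.mem_union.mp (hcy.2.2.1 i hi) with h1 | h1
    · exact h1
    · exact absurd (Finset.mem_singleton.mp h1) (hcon i hi)
  obtain ⟨i0, hi0, hi0e⟩ := hex
  have hn1 : 1 ≤ n := hcy.1
  have hn2 : 2 ≤ n := by
    rcases Nat.lt_or_ge n 2 with hc | hc
    · exfalso
      have hi00 : i0 = 0 := by omega
      have h1 := hcy.2.1 0 (by omega)
      rw [hi00] at hi0e
      rw [hi0e, he, hcy.2.2.2.1, show (0:ℕ)+1 = n by omega] at h1
      rcases Sym2.eq_iff.mp h1 with ⟨ha, hb⟩ | ⟨ha, hb⟩ <;> exact huv (ha.trans hb.symm)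
    · exact hc
  set t := (i0+1) % n with htdef
  have ht : t < n := Nat.mod_lt _ (by omega)
  obtain ⟨-, hfw, hFm, hcl, hvi, hei⟩ := hcy.rotate t ht
  set vf : ℕ → V := fun i => vf0 ((t + i) % n) with hvf
  set ef : ℕ → E := fun i => ef0 ((t + i) % n) with hef
  have hmodkey : ∀ a b : ℕ, (a % n + b) % n = (a + b) % n := fun a b => by
    rw [Nat.add_mod, Nat.mod_mod_of_dvd a (dvd_refl n), ← Nat.add_mod]
  have hlast : ef (n-1) = e := by
    show ef0 ((t + (n-1)) % n) = e
    rw [htdef, hmodkey, show i0+1+(n-1) = i0 + n by omega, Nat.add_mod_right,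
      Nat.mod_eq_of_lt hi0, hi0e]
  have hothers : ∀ i, i < n - 1 → ef i ∈ F := by
    intro i hi
    rcases Finset.mem_union.mp (hFm i (by omega)) with h1 | h1
    · exact h1
    · exfalso
      have : ef i = e := Finset.mem_singleton.mp h1
      have := hei i (n-1) (by omega) (by omega) (this.trans hlast.symm)
      omega
  -- ends e = s(vf (n-1), vf n), vf n = vf 0
  have hestep := hfw (n-1) (by omega)
  rw [show n-1+1 = n by omega, hlast, he, ← hcl] at hestep
  -- hestep : s(u,v) = s(vf (n-1), vf 0)
  set Q : Finset E := Finset.image ef (Finset.range (n-1)) with hQdef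
  have hQF : Q ⊆ F := by
    intro g hg
    obtain ⟨i, hi, rfl⟩ := Finset.mem_image.mp hg
    exact hothers i (Finset.mem_range.mp hi)
  have hQmem : ∀ i, i < n-1 → ef i ∈ Q :=
    fun i hi => Finset.mem_image.mpr ⟨i, Finset.mem_range.mpr hi, rfl⟩
  have hQsur : ∀ g ∈ Q, ∃ i, i < n-1 ∧ ef i = g := by
    intro g hg
    obtain ⟨i, hi, rfl⟩ := Finset.mem_image.mp hg
    exact ⟨i, Finset.mem_range.mp hi, rfl⟩
  have hfw' : FW ends (n-1) vf ef := fun i hi => hfw i (by omega)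
  have hvi' : ∀ i j, i ≤ n-1 → j ≤ n-1 → vf i = vf j → i = j :=
    fun i j hi hj hij => hvi i j (by omega) (by omega) hij
  rcases Sym2.eq_iff.mp hestep.symm with ⟨ha, hb⟩ | ⟨ha, hb⟩
  · -- vf (n-1) = u, vf 0 = v : reverse walk is u → v
    refine ⟨Q, hQF, isPathSet_of_fn (n := n-1) (vf := fun i => vf (n-1-i))
      (ef := fun i => ef (n-1-1-i)) ⟨hfw'.rev, ?_, by simpa using ha, by simpa using hb⟩ ?_ ?_⟩
    · intro i j hi hj hij
      have := hvi' (n-1-i) (n-1-j) (by omega) (by omega) hij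
      omega
    · intro i hi
      exact hQmem (n-1-1-i) (by omega)
    · intro g hg
      obtain ⟨i, hi, rfl⟩ := hQsur g hg
      refine ⟨n-1-1-i, by omega, ?_⟩
      show ef (n-1-1-(n-1-1-i)) = ef i
      congr 1
      omega
  · -- vf (n-1) = v, vf 0 = u : forward walk is u → v
    exact ⟨Q, hQF, isPathSet_of_fn (n := n-1) (vf := vf) (ef := ef)
      ⟨hfw', hvi', hb, ha⟩ hQmem hQsur⟩

/-- the edge set of a path is acyclic -/
lemma path_acyclic {N : ℕ} {pv : ℕ → V} {pe : ℕ → E} (hfw : FW ends N pv pe)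
    (hvi : ∀ i j, i ≤ N → j ≤ N → pv i = pv j → i = j)
    {P : Finset E} (hP2 : ∀ g ∈ P, ∃ i, i < N ∧ pe i = g) :
    ¬ HasCycle ends P := by
  intro h
  obtain ⟨m, vf, ef, hm, hcfw, hPm, hcl, hcvi, hcei⟩ := fn_of_hasCycle h
  have hσex : ∀ i, i < m → ∃ j, j < N ∧ pe j = ef i := fun i hi => hP2 _ (hPm i hi)
  set σ : ℕ → ℕ := fun i => if h : ∃ j, j < N ∧ pe j = ef i then h.choose else 0 with hσdef
  have hσ1 : ∀ i, i < m → σ i < N ∧ pe (σ i) = ef i := by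
    intro i hi
    simp only [hσdef, dif_pos (hσex i hi)]
    exact (hσex i hi).choose_spec
  have hτex : ∀ i, i ≤ m → ∃ j, j ≤ N ∧ pv j = vf i := by
    have base : ∀ i, i < m → ∃ j, j ≤ N ∧ pv j = vf i := by
      intro i hi
      obtain ⟨hσN, hσe⟩ := hσ1 i hi
      have := hcfw i hi
      rw [← hσe, hfw (σ i) hσN] at this
      rcases Sym2.eq_iff.mp this with ⟨h1, _⟩ | ⟨_, h2⟩
      · exact ⟨σ i, by omega, h1⟩
      · exact ⟨σ i + 1, by omega, h2⟩
    intro i hi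
    rcases Nat.lt_or_ge i m with h1 | h1
    · exact base i h1
    · have : i = m := by omega
      subst this
      obtain ⟨j, hj, hpj⟩ := base 0 (by omega)
      exact ⟨j, hj, hpj.trans hcl⟩
  set τ : ℕ → ℕ := fun i => if h : ∃ j, j ≤ N ∧ pv j = vf i then h.choose else 0 with hτdef
  have hτ1 : ∀ i, i ≤ m → τ i ≤ N ∧ pv (τ i) = vf i := by
    intro i hi
    simp only [hτdef, dif_pos (hτex i hi)]
    exact (hτex i hi).choose_spec
  have hstep : ∀ i, i < m →
      (τ i = σ i ∧ τ (i+1) = σ i + 1) ∨ (τ i = σ i + 1 ∧ τ (i+1) = σ i) := by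
    intro i hi
    obtain ⟨hσN, hσe⟩ := hσ1 i hi
    have hs := hcfw i hi
    rw [← hσe, hfw (σ i) hσN] at hs
    obtain ⟨hτa, hpa⟩ := hτ1 i (by omega)
    obtain ⟨hτb, hpb⟩ := hτ1 (i+1) (by omega)
    rw [← hpa, ← hpb] at hs
    rcases Sym2.eq_iff.mp hs with ⟨h1, h2⟩ | ⟨h1, h2⟩
    · exact Or.inl ⟨(hvi _ _ (by omega) hτa h1).symm, (hvi _ _ (by omega) hτb h2).symm⟩
    · exact Or.inr ⟨(hvi _ _ (by omega) hτa h2).symm, (hvi _ _ (by omega) hτb h1).symm⟩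
  have hτinj : ∀ i j, i < m → j < m → τ i = τ j → i = j := by
    intro i j hi hj hij
    have h1 := (hτ1 i (by omega)).2
    have h2 := (hτ1 j (by omega)).2
    rw [hij, h2] at h1
    exact hcvi i j hi hj h1.symm
  have hσinj : ∀ i j, i < m → j < m → σ i = σ j → i = j := by
    intro i j hi hj hij
    have h1 := (hσ1 i hi).2
    have h2 := (hσ1 j hj).2
    rw [hij, h2] at h1
    exact hcei i j hi hj h1.symm
  have hτ0m : τ 0 = τ m := by
    have h1 := (hτ1 0 (by omega)).2
    have h2 := (hτ1 m le_rfl).2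
    rw [hcl, ← h2] at h1
    exact hvi _ _ (hτ1 0 (by omega)).1 (hτ1 m le_rfl).1 h1
  rcases Nat.lt_or_ge m 2 with hm2 | hm2
  · have hm1 : m = 1 := by omega
    have := hstep 0 (by omega)
    rw [show (0:ℕ)+1 = m by omega, ← hτ0m] at this
    omega
  · obtain ⟨i₀, hi₀mem, hmax⟩ := Finset.exists_max_image (Finset.range m) τ
      ⟨0, Finset.mem_range.mpr (by omega)⟩
    have hi₀ : i₀ < m := Finset.mem_range.mp hi₀mem
    have hmax' : ∀ i, i < m → τ i ≤ τ i₀ :=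
      fun i hi => hmax i (Finset.mem_range.mpr hi)
    have hτsucc : τ (if i₀ = 0 then m-1 else i₀-1) + 1 = τ i₀ + 1 → True := fun _ => trivial
    set p := if i₀ = 0 then m-1 else i₀-1 with hpdef
    have hpm : p < m := by
      rcases eq_or_ne i₀ 0 with h | h
      · rw [hpdef, if_pos h]; omega
      · rw [hpdef, if_neg h]; omega
    have hpne : p ≠ i₀ := by
      rcases eq_or_ne i₀ 0 with h | h
      · rw [hpdef, if_pos h, h]; omega
      · rw [hpdef, if_neg h]; omega
    have hp1 : τ (p+1) = τ i₀ := by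
      rcases eq_or_ne i₀ 0 with h | h
      · rw [hpdef, if_pos h, show m-1+1 = m by omega, ← hτ0m, h]
      · rw [hpdef, if_neg h, show i₀-1+1 = i₀ by omega]
    have hσi₀ : σ i₀ + 1 = τ i₀ := by
      rcases hstep i₀ hi₀ with ⟨h1, h2⟩ | ⟨h1, h2⟩
      · exfalso
        rcases Nat.lt_or_ge (i₀+1) m with h3 | h3
        · have := hmax' (i₀+1) h3
          omega
        · have h4 : i₀ + 1 = m := by omega
          rw [h4, ← hτ0m] at h2
          have := hmax' 0 (by omega)
          omega
      · omega
    have hσp : σ p = σ i₀ := by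
      rcases hstep p hpm with ⟨h1, h2⟩ | ⟨h1, h2⟩
      · rw [hp1] at h2
        omega
      · exfalso
        rw [hp1] at h2
        have := hmax' p hpm
        omega
    exact hpne (hσinj p i₀ hpm hi₀ hσp)


/-- two different u-v paths produce a cycle in their union -/
lemma two_paths_cycle {n m : ℕ} {pv qv : ℕ → V} {pe qe : ℕ → E} {P Q : Finset E}
    (hp : PaF ends u v n pv pe) (hq : PaF ends u v m qv qe)
    (hPm : ∀ i, i < n → pe i ∈ P) (hPs : ∀ g ∈ P, ∃ i, i < n ∧ pe i = g)
    (hQm : ∀ i, i < m → qe i ∈ Q) (hQs : ∀ g ∈ Q, ∃ i, i < m ∧ qe i = g)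
    (hne : P ≠ Q) : HasCycle ends (P ∪ Q) := by
  obtain ⟨hpfw, hpvi, hp0, hpn⟩ := hp
  obtain ⟨hqfw, hqvi, hq0, hqn⟩ := hq
  have hpei := path_edge_inj hpfw hpvi
  have hqei := path_edge_inj hqfw hqvi
  have hvpref : ∀ k, (∀ i, i < k → pe i = qe i) → k ≤ n → k ≤ m → ∀ i, i ≤ k → pv i = qv i := by
    intro k hagree hkn hkm i
    induction i with
    | zero => intro _; rw [hp0, hq0]
    | succ i ih =>
      intro hik
      have hpvi_eq := ih (by omega)
      have h1 := hpfw i (by omega)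
      have h2 := hqfw i (by omega)
      rw [hagree i (by omega), h2] at h1
      rcases Sym2.eq_iff.mp h1 with ⟨ha, hb⟩ | ⟨ha, hb⟩
      · exact hb.symm
      · rw [← hpvi_eq] at ha
        have := hpvi i (i+1) (by omega) (by omega) ha
        omega
  by_cases hdiv : ∃ kk, kk < n ∧ kk < m ∧ pe kk ≠ qe kk
  case neg =>
    push_neg at hdiv
    exfalso
    have hnm : n = m := by
      rcases le_total n m with h | h
      · have h1 := hvpref n (fun i hi => hdiv i hi (by omega)) le_rfl h n le_rfl
        rw [hpn, ← hqn] at h1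
        exact hqvi n m h le_rfl h1.symm
      · have h1 := hvpref m (fun i hi => hdiv i (by omega) hi) h le_rfl m le_rfl
        rw [hqn, ← hpn] at h1
        exact hpvi n m le_rfl h h1.symm
    apply hne
    ext g
    constructor
    · intro hg
      obtain ⟨i, hi, rfl⟩ := hPs g hg
      rw [hdiv i hi (by omega)]
      exact hQm i (by omega)
    · intro hg
      obtain ⟨i, hi, rfl⟩ := hQs g hg
      rw [← hdiv i (by omega) hi]
      exact hPm i (by omega)
  case pos =>
    have hfind := Nat.find_spec hdiv
    set k := Nat.find hdiv with hkdef
    obtain ⟨hkn, hkm, hkne⟩ := hfind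
    have hkmin : ∀ i, i < k → pe i = qe i := by
      intro i hik
      by_contra hcon
      exact Nat.find_min hdiv (show i < Nat.find hdiv by omega) ⟨by omega, by omega, hcon⟩
    have hpref : ∀ i, i ≤ k → pv i = qv i := hvpref k hkmin (by omega) (by omega)
    have hSex' : ∃ i, k < i ∧ i ≤ n ∧ ∃ j, k < j ∧ j ≤ m ∧ pv i = qv j :=
      ⟨n, by omega, le_rfl, m, by omega, le_rfl, by rw [hpn, hqn]⟩
    set i₁ := Nat.find hSex' with hi₁def
    obtain ⟨hi₁k, hi₁n, j₁, hj₁k, hj₁m, hmeet⟩ := Nat.find_spec hSex'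
    have hi₁min : ∀ i, k < i → i < i₁ → ∀ j, k < j → j ≤ m → pv i ≠ qv j := by
      intro i h1 h2 j h3 h4 hcon
      have hile : i ≤ n := by omega
      exact Nat.find_min hSex' (show i < Nat.find hSex' by omega) ⟨h1, hile, j, h3, h4, hcon⟩
    set a := i₁ - k with hadef
    set b := j₁ - k with hbdef
    set L := a + b with hLdef
    apply hasCycle_of_fn (n := L)
      (vf := fun t => if t ≤ a then pv (k + t) else qv (j₁ - (t - a)))
      (ef := fun t => if t < a then pe (k + t) else qe (j₁ - 1 - (t - a)))
    have hvfq : ∀ t, a ≤ t → t ≤ L →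
        (if t ≤ a then pv (k + t) else qv (j₁ - (t - a))) = qv (j₁ - (t - a)) := by
      intro t h1 h2
      rcases eq_or_ne t a with h | h
      · rw [if_pos (by omega), h, show k + a = i₁ by omega, hmeet]
        congr 1
        omega
      · rw [if_neg (by omega)]
    refine ⟨by omega, ?_, ?_, ?_, ?_, ?_⟩
    · intro t ht
      simp only []
      rcases Nat.lt_or_ge t a with h | h
      · rw [if_pos h, if_pos (by omega : t ≤ a), if_pos (by omega : t + 1 ≤ a)]
        exact hpfw (k + t) (by omega)
      · rw [if_neg (by omega : ¬ t < a), hvfq t h (by omega), hvfq (t+1) (by omega) (by omega)]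
        have hidx : j₁ - 1 - (t - a) + 1 = j₁ - (t - a) := by omega
        have hq2 := hqfw (j₁ - 1 - (t - a)) (by omega)
        rw [hidx] at hq2
        rw [hq2, show j₁ - (t + 1 - a) = j₁ - 1 - (t - a) by omega]
        exact Sym2.eq_swap
    · intro t ht
      simp only []
      rcases Nat.lt_or_ge t a with h | h
      · rw [if_pos h]
        exact Finset.mem_union_left _ (hPm (k + t) (by omega))
      · rw [if_neg (by omega : ¬ t < a)]
        exact Finset.mem_union_right _ (hQm (j₁ - 1 - (t - a)) (by omega))
    · simp only []
      rw [if_pos (by omega : (0:ℕ) ≤ a), hvfq L (by omega) le_rfl,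
        show j₁ - (L - a) = k by omega, Nat.add_zero]
      exact hpref k le_rfl
    · intro t1 t2 ht1 ht2 heq
      simp only [] at heq
      rcases Nat.lt_or_ge t1 a with h1 | h1 <;> rcases Nat.lt_or_ge t2 a with h2 | h2
      · rw [if_pos (by omega : t1 ≤ a), if_pos (by omega : t2 ≤ a)] at heq
        have := hpvi (k+t1) (k+t2) (by omega) (by omega) heq
        omega
      · rw [if_pos (by omega : t1 ≤ a), hvfq t2 h2 (by omega)] at heq
        have hj' : k < j₁ - (t2 - a) := by omega
        rcases Nat.eq_or_lt_of_le (show k ≤ k + t1 by omega) with h3 | h3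
        · rw [← h3, hpref k le_rfl] at heq
          have := hqvi k (j₁ - (t2 - a)) (by omega) (by omega) heq
          omega
        · exact absurd heq (hi₁min (k+t1) (by omega) (by omega) _ hj' (by omega))
      · rw [if_pos (by omega : t2 ≤ a), hvfq t1 h1 (by omega)] at heq
        have hj' : k < j₁ - (t1 - a) := by omega
        rcases Nat.eq_or_lt_of_le (show k ≤ k + t2 by omega) with h3 | h3
        · rw [← h3, hpref k le_rfl] at heq
          have := hqvi (j₁ - (t1 - a)) k (by omega) (by omega) heq
          omega
        · exact absurd heq.symm (hi₁min (k+t2) (by omega) (by omega) _ hj' (by omega))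
      · rw [hvfq t1 h1 (by omega), hvfq t2 h2 (by omega)] at heq
        have := hqvi (j₁ - (t1 - a)) (j₁ - (t2 - a)) (by omega) (by omega) heq
        omega
    · intro t1 t2 ht1 ht2 heq
      simp only [] at heq
      have cross : ∀ s1 s2, s1 < a → a ≤ s2 → s2 < L → pe (k + s1) ≠ qe (j₁ - 1 - (s2 - a)) := by
        intro s1 s2 hs1 hs2a hs2L hcon
        have haan : k + s1 < i₁ := by omega
        have hbbr : k ≤ j₁ - 1 - (s2 - a) ∧ j₁ - 1 - (s2 - a) < j₁ := by omega
        have h1 := hpfw (k + s1) (by omega)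
        have h2 := hqfw (j₁ - 1 - (s2 - a)) (by omega)
        rw [hcon, h2] at h1
        rcases Sym2.eq_iff.mp h1 with ⟨ha, hb⟩ | ⟨ha, hb⟩
        · -- qv bb = pv aa, qv (bb+1) = pv (aa+1)
          rcases eq_or_ne (j₁ - 1 - (s2 - a)) k with hbk | hbk
          · rcases eq_or_ne s1 0 with hak | hak
            · rw [hbk] at hcon
              rw [hak, Nat.add_zero] at hcon
              exact hkne hcon
            · rw [hbk, ← hpref k le_rfl] at ha
              have := hpvi k (k+s1) (by omega) (by omega) ha
              omega
          · rcases eq_or_ne s1 0 with hak | hak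
            · rw [hak, Nat.add_zero, hpref k le_rfl] at ha
              have := hqvi (j₁ - 1 - (s2 - a)) k (by omega) (by omega) ha
              omega
            · exact hi₁min (k+s1) (by omega) haan _ (by omega) (by omega) ha.symm
        · -- qv bb = pv (aa+1), qv (bb+1) = pv aa
          rcases eq_or_ne (j₁ - 1 - (s2 - a)) k with hbk | hbk
          · rw [hbk, ← hpref k le_rfl] at ha
            have := hpvi k (k+s1+1) (by omega) (by omega) ha
            omega
          · rcases Nat.lt_or_ge (k+s1+1) i₁ with hlt | hge
            · exact hi₁min (k+s1+1) (by omega) hlt _ (by omega) (by omega) ha.symm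
            · have haai : k + s1 + 1 = i₁ := by omega
              have h5 : pv (k+s1+1) = qv j₁ := by rw [haai]; exact hmeet
              have := hqvi (j₁ - 1 - (s2 - a)) j₁ (by omega) (by omega) (ha.trans h5)
              omega
      rcases Nat.lt_or_ge t1 a with h1 | h1 <;> rcases Nat.lt_or_ge t2 a with h2 | h2
      · rw [if_pos h1, if_pos h2] at heq
        have := hpei (k+t1) (k+t2) (by omega) (by omega) heq
        omega
      · rw [if_pos h1, if_neg (by omega : ¬ t2 < a)] at heq
        exact absurd heq (cross t1 t2 h1 h2 (by omega))
      · rw [if_neg (by omega : ¬ t1 < a), if_pos h2] at heq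
        exact absurd heq.symm (cross t2 t1 h2 h1 (by omega))
      · rw [if_neg (by omega : ¬ t1 < a), if_neg (by omega : ¬ t2 < a)] at heq
        have := hqei (j₁ - 1 - (t1 - a)) (j₁ - 1 - (t2 - a)) (by omega) (by omega) heq
        omega

/-- glue a walk between two path vertices with the path segment to get a cycle -/
lemma glue_cycle {N : ℕ} {pv : ℕ → V} {pe : ℕ → E} {P F : Finset E}
    (hp : PaF ends u v N pv pe)
    (hPm : ∀ i, i < N → pe i ∈ P) (hFP : ∀ g ∈ F, g ∉ P)
    {m : ℕ} {wv : ℕ → V} {we : ℕ → E}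
    (hm : 1 ≤ m) (hfw : FW ends m wv we) (hFe : ∀ i, i < m → we i ∈ F)
    (hei : ∀ i j, i < m → j < m → we i = we j → i = j)
    (hint : ∀ i, 0 < i → i < m → ∀ j, j ≤ N → pv j ≠ wv i)
    (hintinj : ∀ i j, 0 < i → i < m → 0 < j → j < m → wv i = wv j → i = j)
    {s t : ℕ} (htN : t ≤ N) (hws : wv 0 = pv s) (hwt : wv m = pv t) (hst : s < t) :
    HasCycle ends (F ∪ P) := by
  obtain ⟨hpfw, hpvi, hp0, hpn⟩ := hp
  have hpei := path_edge_inj hpfw hpvi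
  set L := m + (t - s) with hLdef
  apply hasCycle_of_fn (n := L)
    (vf := fun i => if i ≤ m then wv i else pv (t - (i - m)))
    (ef := fun i => if i < m then we i else pe (t - 1 - (i - m)))
  have hvfc : ∀ i, m ≤ i → i ≤ L →
      (if i ≤ m then wv i else pv (t - (i - m))) = pv (t - (i - m)) := by
    intro i h1 h2
    rcases eq_or_ne i m with h | h
    · rw [if_pos (by omega), h, hwt]
      congr 1
      omega
    · rw [if_neg (by omega)]
  refine ⟨by omega, ?_, ?_, ?_, ?_, ?_⟩
  · intro i hi
    simp only []
    rcases Nat.lt_or_ge i m with h | h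
    · rw [if_pos h, if_pos (by omega : i ≤ m), if_pos (by omega : i + 1 ≤ m)]
      exact hfw i h
    · rw [if_neg (by omega : ¬ i < m), hvfc i h (by omega), hvfc (i+1) (by omega) (by omega)]
      have hidx : t - 1 - (i - m) + 1 = t - (i - m) := by omega
      have hq2 := hpfw (t - 1 - (i - m)) (by omega)
      rw [hidx] at hq2
      rw [hq2, show t - (i + 1 - m) = t - 1 - (i - m) by omega]
      exact Sym2.eq_swap
  · intro i hi
    simp only []
    rcases Nat.lt_or_ge i m with h | h
    · rw [if_pos h]
      exact Finset.mem_union_left _ (hFe i h)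
    · rw [if_neg (by omega : ¬ i < m)]
      exact Finset.mem_union_right _ (hPm (t - 1 - (i - m)) (by omega))
  · simp only []
    rw [if_pos (by omega : (0:ℕ) ≤ m), hvfc L (by omega) le_rfl,
      show t - (L - m) = s by omega]
    exact hws
  · intro i j hi hj heq
    simp only [] at heq
    rcases Nat.lt_or_ge i m with h1 | h1 <;> rcases Nat.lt_or_ge j m with h2 | h2
    · rw [if_pos (by omega : i ≤ m), if_pos (by omega : j ≤ m)] at heq
      rcases Nat.eq_or_lt_of_le (Nat.zero_le i) with hi0 | hi0 <;>
        rcases Nat.eq_or_lt_of_le (Nat.zero_le j) with hj0 | hj0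
      · omega
      · exfalso
        rw [← hi0, hws] at heq
        exact hint j hj0 h2 s (by omega) heq
      · exfalso
        rw [← hj0, hws] at heq
        exact hint i hi0 h1 s (by omega) heq.symm
      · exact hintinj i j hi0 h1 hj0 h2 heq
    · rw [if_pos (by omega : i ≤ m), hvfc j h2 (by omega)] at heq
      rcases Nat.eq_or_lt_of_le (Nat.zero_le i) with hi0 | hi0
      · rw [← hi0, hws] at heq
        have := hpvi s (t - (j - m)) (by omega) (by omega) heq
        omega
      · exact absurd heq.symm (hint i hi0 h1 (t - (j - m)) (by omega))
    · rw [if_pos (by omega : j ≤ m), hvfc i h1 (by omega)] at heq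
      rcases Nat.eq_or_lt_of_le (Nat.zero_le j) with hj0 | hj0
      · rw [← hj0, hws] at heq
        have := hpvi (t - (i - m)) s (by omega) (by omega) heq
        omega
      · exact absurd heq (hint j hj0 h2 (t - (i - m)) (by omega))
    · rw [hvfc i h1 (by omega), hvfc j h2 (by omega)] at heq
      have := hpvi (t - (i - m)) (t - (j - m)) (by omega) (by omega) heq
      omega
  · intro i j hi hj heq
    simp only [] at heq
    rcases Nat.lt_or_ge i m with h1 | h1 <;> rcases Nat.lt_or_ge j m with h2 | h2
    · rw [if_pos h1, if_pos h2] at heq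
      exact hei i j h1 h2 heq
    · rw [if_pos h1, if_neg (by omega : ¬ j < m)] at heq
      exact absurd (hPm (t - 1 - (j - m)) (by omega)) (heq ▸ hFP _ (hFe i h1))
    · rw [if_neg (by omega : ¬ i < m), if_pos h2] at heq
      exact absurd (hPm (t - 1 - (i - m)) (by omega)) (heq ▸ hFP _ (hFe j h2))
    · rw [if_neg (by omega : ¬ i < m), if_neg (by omega : ¬ j < m)] at heq
      have := hpei (t - 1 - (i - m)) (t - 1 - (j - m)) (by omega) (by omega) heq
      omega

/-- projection: a cycle in G within F ∪ P gives a cycle in G/P within F -/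
lemma contract_cycle_proj {N : ℕ} {pv : ℕ → V} {pe : ℕ → E} {P F : Finset E}
    (hp : PaF ends u v N pv pe)
    (hPs : ∀ g ∈ P, ∃ i, i < N ∧ pe i = g)
    (r : V → V) (hru : ∀ w j, j ≤ N → pv j = w → r w = u)
    (h : HasCycle ends (F ∪ P)) : HasCycle (fun f => (ends f).map r) F := by
  obtain ⟨m, vf, ef, hm, hcfw, hFm, hcl, hcvi, hcei⟩ := fn_of_hasCycle h
  have hFex : ∃ i, i < m ∧ ef i ∈ F := by
    by_contra hcon
    push_neg at hcon
    have hallP : ∀ i, i < m → ef i ∈ P := by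
      intro i hi
      rcases Finset.mem_union.mp (hFm i hi) with h1 | h1
      · exact absurd h1 (hcon i hi)
      · exact h1
    exact path_acyclic hp.1 hp.2.1 hPs
      (hasCycle_of_fn ⟨hm, hcfw, hallP, hcl, hcvi, hcei⟩)
  apply loopyWalk_hasCycle m (fun i => r (vf i)) ef
  · intro i hi
    show (ends (ef i)).map r = _
    rw [hcfw i hi, Sym2.map_pair_eq]
  · show r (vf 0) = r (vf m)
    rw [hcl]
  · exact hcei
  · intro i hi
    by_cases hFi : ef i ∈ F
    · exact Or.inl hFi
    · right
      have hPi : ef i ∈ P := by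
        rcases Finset.mem_union.mp (hFm i hi) with h1 | h1
        · exact absurd h1 hFi
        · exact h1
      obtain ⟨j, hj, hje⟩ := hPs _ hPi
      have h1 := hcfw i hi
      rw [← hje, hp.1 j hj] at h1
      rcases Sym2.eq_iff.mp h1 with ⟨ha, hb⟩ | ⟨ha, hb⟩
      · rw [hru (vf i) j (by omega) ha, hru (vf (i+1)) (j+1) (by omega) hb]
      · rw [hru (vf i) (j+1) (by omega) hb, hru (vf (i+1)) j (by omega) ha]
  · exact hFex

lemma sym2_rep (z : Sym2 V) : ∃ x y : V, z = s(x, y) := by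
  induction z using Sym2.ind with
  | _ x y => exact ⟨x, y, rfl⟩

/-- lifting: a cycle in G/P within F gives a cycle in G within F ∪ P -/
lemma contract_cycle_lift {N : ℕ} {pv : ℕ → V} {pe : ℕ → E} {P F : Finset E}
    (hp : PaF ends u v N pv pe)
    (hPm : ∀ i, i < N → pe i ∈ P) (hFP : ∀ g ∈ F, g ∉ P)
    (r : V → V) (hru : ∀ w j, j ≤ N → pv j = w → r w = u)
    (hrfix : ∀ w, r w ≠ u → r w = w) (hrvp : ∀ w, r w = u → ∃ j, j ≤ N ∧ pv j = w)
    (h : HasCycle (fun f => (ends f).map r) F) : HasCycle ends (F ∪ P) := by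
  obtain ⟨m, vf0, ef0, hCy⟩ := fn_of_hasCycle h
  by_cases husome : ∃ t, t < m ∧ vf0 t = u
  case neg =>
    -- the cycle avoids the contracted vertex: it is a cycle in G already
    push_neg at husome
    obtain ⟨hm, hcfw, hFm, hcl, hcvi, hcei⟩ := hCy
    apply hasCycle_mono (F := F) _ Finset.subset_union_left
    apply hasCycle_of_fn (n := m) (vf := vf0) (ef := ef0)
    refine ⟨hm, ?_, hFm, hcl, hcvi, hcei⟩
    intro i hi
    have h1 := hcfw i hi
    obtain ⟨x, y, hxy⟩ := sym2_rep (ends (ef0 i))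
    rw [show (fun f => (ends f).map r) (ef0 i) = (ends (ef0 i)).map r from rfl,
      hxy, Sym2.map_pair_eq] at h1
    have hvfi : vf0 i ≠ u := husome i hi
    have hvfi1 : vf0 (i+1) ≠ u := by
      rcases Nat.lt_or_ge (i+1) m with h2 | h2
      · exact husome (i+1) h2
      · have : i+1 = m := by omega
        rw [this, ← hcl]
        exact husome 0 (by omega)
    rw [hxy]
    rcases Sym2.eq_iff.mp h1 with ⟨ha, hb⟩ | ⟨ha, hb⟩
    · rw [← ha, ← hb, hrfix x (by rw [ha]; exact hvfi), hrfix y (by rw [hb]; exact hvfi1)]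
    · rw [← ha, ← hb, hrfix x (by rw [ha]; exact hvfi1), hrfix y (by rw [hb]; exact hvfi)]
      exact Sym2.eq_swap
  case pos =>
    obtain ⟨t, htm, htu⟩ := husome
    have hm1 : 1 ≤ m := hCy.1
    obtain ⟨-, hfw, hFm, hcl, hvi, hei⟩ := hCy.rotate t htm
    set vf : ℕ → V := fun i => vf0 ((t + i) % m) with hvfdef
    set ef : ℕ → E := fun i => ef0 ((t + i) % m) with hefdef
    have hvf0u : vf 0 = u := by
      show vf0 ((t + 0) % m) = u
      rw [Nat.add_zero, Nat.mod_eq_of_lt htm, htu]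
    have hvfmu : vf m = u := by rw [← hcl, hvf0u]
    have hvfiu : ∀ i, 0 < i → i < m → vf i ≠ u := by
      intro i h1 h2 hcon
      have := hvi i 0 h2 (by omega) (hcon.trans hvf0u.symm)
      omega
    -- lift each edge
    have hlift : ∀ i, i < m → ∃ xy : V × V,
        ends (ef i) = s(xy.1, xy.2) ∧ r xy.1 = vf i ∧ r xy.2 = vf (i+1) := by
      intro i hi
      have h1 := hfw i hi
      obtain ⟨x, y, hxy⟩ := sym2_rep (ends (ef i))
      rw [show (fun f => (ends f).map r) (ef i) = (ends (ef i)).map r from rfl,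
        hxy, Sym2.map_pair_eq] at h1
      rcases Sym2.eq_iff.mp h1 with ⟨ha, hb⟩ | ⟨ha, hb⟩
      · exact ⟨(x, y), hxy, ha, hb⟩
      · exact ⟨(y, x), hxy.trans Sym2.eq_swap, hb, ha⟩
    set lf : ℕ → V × V := fun i => if h : i < m then (hlift i h).choose else (u, u)
      with hlfdef
    have hlf : ∀ i, i < m → ends (ef i) = s((lf i).1, (lf i).2) ∧
        r (lf i).1 = vf i ∧ r (lf i).2 = vf (i+1) := by
      intro i hi
      simp only [hlfdef, dif_pos hi]
      exact (hlift i hi).choose_spec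
    -- interior vertices are fixed and outside the path
    have hmid : ∀ i, 0 < i → i < m → ∀ j, j ≤ N → pv j ≠ vf i := by
      intro i h1 h2 j hj hcon
      obtain ⟨-, hra, -⟩ := hlf i h2
      have hfixx := hrfix (lf i).1 (by rw [hra]; exact hvfiu i h1 h2)
      have heq1 : (lf i).1 = vf i := hfixx.symm.trans hra
      have hrvf : r (vf i) = vf i := by rw [← heq1, hfixx]
      have h3 := hru (vf i) j hj hcon
      rw [hrvf] at h3
      exact hvfiu i h1 h2 h3
    set wv : ℕ → V := fun i => if i = 0 then (lf 0).1 else if i = m then (lf (m-1)).2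
      else vf i with hwvdef
    have hwvmid : ∀ i, 0 < i → i < m → wv i = vf i := by
      intro i h1 h2
      simp only [hwvdef]
      rw [if_neg (by omega), if_neg (by omega)]
    have hwfw : FW ends m wv ef := by
      intro i hi
      obtain ⟨hxy, hra, hrb⟩ := hlf i hi
      rw [hxy]
      have hwa : wv i = (lf i).1 := by
        rcases eq_or_ne i 0 with h | h
        · simp only [hwvdef, h, if_pos rfl]
        · rw [hwvmid i (by omega) hi]
          rw [← hrfix (lf i).1 (by rw [hra]; exact hvfiu i (by omega) hi), hra]
      have hwb : wv (i+1) = (lf i).2 := by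
        rcases eq_or_ne (i+1) m with h | h
        · simp only [hwvdef]
          rw [if_neg (by omega), if_pos h, show m - 1 = i by omega]
        · rw [hwvmid (i+1) (by omega) (by omega)]
          rw [← hrfix (lf i).2 (by rw [hrb]; exact hvfiu (i+1) (by omega) (by omega)), hrb]
      rw [hwa, hwb]
    obtain ⟨si, hsiN, hsi⟩ : ∃ j, j ≤ N ∧ pv j = (lf 0).1 := by
      apply hrvp
      rw [(hlf 0 (by omega)).2.1, hvf0u]
    obtain ⟨ti, htiN, hti⟩ : ∃ j, j ≤ N ∧ pv j = (lf (m-1)).2 := by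
      apply hrvp
      rw [(hlf (m-1) (by omega)).2.2, show m-1+1 = m by omega, hvfmu]
    have hwv0 : wv 0 = pv si := by simp only [hwvdef, if_pos rfl]; exact hsi.symm
    have hwvm : wv m = pv ti := by
      have h4 : wv m = (lf (m-1)).2 := by
        simp only [hwvdef]
        rw [if_neg (show m ≠ 0 by omega)]
        simp
      rw [h4]
      exact hti.symm
    have hFe : ∀ i, i < m → ef i ∈ F := hFm
    rcases lt_trichotomy si ti with hst | hst | hst
    · -- si < ti : glue forward walk
      refine glue_cycle hp hPm hFP hm1 hwfw hFe hei ?_ ?_ htiN hwv0 hwvm hst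
      · intro i h1 h2 j hj
        rw [hwvmid i h1 h2]
        exact hmid i h1 h2 j hj
      · intro i j h1 h2 h3 h4 heq
        rw [hwvmid i h1 h2, hwvmid j h3 h4] at heq
        exact hvi i j h2 h4 heq
    · -- si = ti : the lifted walk is closed, a cycle in G
      apply hasCycle_mono (F := F) _ Finset.subset_union_left
      apply closedWalk_hasCycle m wv ef hm1 hwfw hFe _ hei
      rw [hwv0, hwvm, hst]
    · -- ti < si : glue reversed walk
      have hws' : (fun i => wv (m - i)) 0 = pv ti := by
        show wv (m - 0) = pv ti
        rw [Nat.sub_zero]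
        exact hwvm
      have hwt' : (fun i => wv (m - i)) m = pv si := by
        show wv (m - m) = pv si
        rw [Nat.sub_self]
        exact hwv0
      refine glue_cycle hp hPm hFP hm1 hwfw.rev (fun i hi => hFe (m-1-i) (by omega))
        ?_ ?_ ?_ hsiN hws' hwt' hst
      · intro i j h1 h2 heq
        have := hei (m-1-i) (m-1-j) (by omega) (by omega) heq
        omega
      · intro i h1 h2 j hj
        show pv j ≠ wv (m - i)
        rw [hwvmid (m-i) (by omega) (by omega)]
        exact hmid (m-i) (by omega) (by omega) j hj
      · intro i j h1 h2 h3 h4 heq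
        show i = j
        rw [hwvmid (m-i) (by omega) (by omega), hwvmid (m-j) (by omega) (by omega)] at heq
        have := hvi (m-i) (m-j) (by omega) (by omega) heq
        omega

/-- the contraction map characterization hypotheses, for a general path -/
lemma r_spec {N : ℕ} {pv : ℕ → V} {pe : ℕ → E} {P : Finset E}
    (hp : PaF ends u v N pv pe)
    (hPm : ∀ i, i < N → pe i ∈ P) (hPs : ∀ g ∈ P, ∃ i, i < N ∧ pe i = g) :
    (∀ w j, j ≤ N → pv j = w →
        (if w = u ∨ w = v ∨ ∃ g ∈ P, w ∈ ends g then u else w) = u) ∧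
    (∀ w, (if w = u ∨ w = v ∨ ∃ g ∈ P, w ∈ ends g then u else w) ≠ u →
        (if w = u ∨ w = v ∨ ∃ g ∈ P, w ∈ ends g then u else w) = w) ∧
    (∀ w, (if w = u ∨ w = v ∨ ∃ g ∈ P, w ∈ ends g then u else w) = u →
        ∃ j, j ≤ N ∧ pv j = w) := by
  obtain ⟨hfw, hvi, h0, hN⟩ := hp
  refine ⟨?_, ?_, ?_⟩
  · intro w j hj hpj
    rcases Nat.lt_or_ge j N with h | h
    · refine if_pos (Or.inr (Or.inr ⟨pe j, hPm j h, ?_⟩))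
      rw [hfw j h, ← hpj]
      exact Sym2.mem_mk_left _ _
    · have hjN : j = N := by omega
      refine if_pos (Or.inr (Or.inl ?_))
      rw [← hpj, hjN, hN]
  · intro w hne
    by_cases hc : w = u ∨ w = v ∨ ∃ g ∈ P, w ∈ ends g
    · exact absurd (if_pos hc) hne
    · exact if_neg hc
  · intro w hw
    by_cases hc : w = u ∨ w = v ∨ ∃ g ∈ P, w ∈ ends g
    · rcases hc with h | h | ⟨g, hg, hwg⟩
      · exact ⟨0, by omega, by rw [h0, h]⟩
      · exact ⟨N, le_rfl, by rw [hN, h]⟩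
      · obtain ⟨i, hi, rfl⟩ := hPs g hg
        rw [hfw i hi] at hwg
        rcases Sym2.mem_iff.mp hwg with h | h
        · exact ⟨i, by omega, h.symm⟩
        · exact ⟨i+1, by omega, h.symm⟩
    · rw [if_neg hc] at hw
      exact ⟨0, by omega, by rw [h0, hw]⟩

lemma mem_pathSets_iff {P : Finset E} :
    P ∈ pathSets ends u v ↔ IsPathSet ends u v P := by
  simp [pathSets]

end ZC

open ZC

/-- Identity (4.2): for an edge `e = uv`,
`Z_G(x) = Z_{G/e}(x) + Σ_{P ∈ 𝓟_{G,u,v}} x^{|P|} Z_{G/P}(x)`, where contraction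
identifies the vertices of the contracted edge/path (mapping them all to `u`) and
deletes the contracted edges (keeping any parallel edges and loops that arise). -/
theorem Zmult_contraction (ends : E → Sym2 V) (e : E) (u v : V) (huv : u ≠ v)
    (he : ends e = s(u, v)) (x : ℝ) :
    Zmult ends x =
      ZmultOn (fun f => (ends f).map fun w => if w = v then u else w) {e} x +
      ∑ P ∈ pathSets ends u v,
        x ^ P.card *
          ZmultOn (fun f => (ends f).map fun w =>
            if w = u ∨ w = v ∨ ∃ g ∈ P, w ∈ ends g then u else w) P x := by
  classical
  -- path data for the single edge e
  set pv0 : ℕ → V := fun i => if i = 0 then u else v with hpv0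
  set pe0 : ℕ → E := fun _ => e with hpe0
  have hp0 : PaF ends u v 1 pv0 pe0 := by
    refine ⟨?_, ?_, by simp [hpv0], by simp [hpv0]⟩
    · intro i hi
      have : i = 0 := by omega
      subst this
      simp only [hpv0, hpe0, if_pos rfl, if_neg (by omega : (0:ℕ)+1 ≠ 0)]
      exact he
    · intro i j hi hj hij
      simp only [hpv0] at hij
      rcases eq_or_ne i 0 with h1 | h1 <;> rcases eq_or_ne j 0 with h2 | h2
      · omega
      · rw [if_pos h1, if_neg h2] at hij
        exact absurd hij huv
      · rw [if_neg h1, if_pos h2] at hij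
        exact absurd hij.symm huv
      · omega
  have hPm0 : ∀ i, i < 1 → pe0 i ∈ ({e} : Finset E) := by
    intro i _
    simp [hpe0]
  have hPs0 : ∀ g ∈ ({e} : Finset E), ∃ i, i < 1 ∧ pe0 i = g := by
    intro g hg
    exact ⟨0, by omega, by simp [hpe0, (Finset.mem_singleton.mp hg).symm]⟩
  have hru1 : ∀ w j, j ≤ 1 → pv0 j = w → (if w = v then u else w) = u := by
    intro w j hj hw
    by_cases h : w = v
    · rw [if_pos h]
    · rw [if_neg h]
      rcases eq_or_ne j 0 with h1 | h1
      · rw [← hw, h1]; simp [hpv0]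
      · exfalso
        apply h
        rw [← hw, show j = 1 by omega]
        simp [hpv0]
  have hrfix1 : ∀ w : V, (if w = v then u else w) ≠ u → (if w = v then u else w) = w := by
    intro w hne
    by_cases h : w = v
    · exact absurd (if_pos h) hne
    · exact if_neg h
  have hrvp1 : ∀ w : V, (if w = v then u else w) = u → ∃ j, j ≤ 1 ∧ pv0 j = w := by
    intro w hw
    by_cases h : w = v
    · exact ⟨1, le_rfl, by simp [hpv0, h]⟩
    · rw [if_neg h] at hw
      exact ⟨0, by omega, by simp [hpv0, hw]⟩
  have hZ : Zmult ends x
      = ∑ F ∈ Finset.univ.powerset.filter (fun F => ¬ HasCycle ends F), x ^ F.card := by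
    simp [Zmult, ZmultOn]
  rw [hZ, ← Finset.sum_filter_add_sum_filter_not
    (Finset.univ.powerset.filter (fun F => ¬ HasCycle ends F))
    (fun F => ∃ Q ∈ pathSets ends u v, Q ⊆ F), add_comm]
  congr 1
  · -- deleted/no-path part = contraction of e
    have hsetEq : (Finset.univ.powerset.filter (fun F => ¬ HasCycle ends F)).filter
        (fun F => ¬ ∃ Q ∈ pathSets ends u v, Q ⊆ F)
        = (Finset.univ \ ({e} : Finset E)).powerset.filter
            (fun F => ¬ HasCycle (fun f => (ends f).map fun w => if w = v then u else w) F) := by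
      ext F
      simp only [Finset.mem_filter, Finset.mem_powerset]
      constructor
      · rintro ⟨⟨-, hnc⟩, hnp⟩
        have heF : e ∉ F := by
          intro he'
          apply hnp
          refine ⟨{e}, mem_pathSets_iff.mpr ?_, Finset.singleton_subset_iff.mpr he'⟩
          exact isPathSet_of_fn hp0 hPm0 hPs0
        refine ⟨fun g hg => Finset.mem_sdiff.mpr ⟨Finset.mem_univ g,
          fun hc => heF ((Finset.mem_singleton.mp hc) ▸ hg)⟩, ?_⟩
        intro hcy
        have hlift := contract_cycle_lift hp0 hPm0
          (fun g hg hc => heF ((Finset.mem_singleton.mp hc) ▸ hg))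
          _ hru1 hrfix1 hrvp1 hcy
        obtain ⟨Q, hQF, hQp⟩ := cycle_to_path huv he hlift hnc heF
        exact hnp ⟨Q, mem_pathSets_iff.mpr hQp, hQF⟩
      · rintro ⟨hsub, hnc1⟩
        have heF : e ∉ F := fun hc => (Finset.mem_sdiff.mp (hsub hc)).2 (Finset.mem_singleton.mpr rfl)
        have hnc : ¬ HasCycle ends F := by
          intro hcy
          exact hnc1 (contract_cycle_proj hp0 hPs0 _ hru1
            (hasCycle_mono hcy Finset.subset_union_left))
        refine ⟨⟨fun g _ => Finset.mem_univ g, hnc⟩, ?_⟩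
        rintro ⟨Q, hQmem, hQsub⟩
        obtain ⟨nQ, qv, qe, hqp, hQm, hQs, -⟩ :=
          fn_of_isPathSet e (mem_pathSets_iff.mp hQmem)
        have hcyc : HasCycle ends (F ∪ {e}) := by
          refine path_close hqp he ?_ ?_ (Finset.mem_union_right _ (Finset.mem_singleton.mpr rfl))
          · intro i hi hcon
            exact heF (hcon ▸ hQsub (hQm i hi))
          · intro i hi
            exact Finset.mem_union_left _ (hQsub (hQm i hi))
        exact hnc1 (contract_cycle_proj hp0 hPs0 _ hru1 hcyc)
    rw [hsetEq]
    rfl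
  · -- path part
    have hRHS : ∀ P ∈ pathSets ends u v,
        x ^ P.card * ZmultOn (fun f => (ends f).map fun w =>
            if w = u ∨ w = v ∨ ∃ g ∈ P, w ∈ ends g then u else w) P x
        = ∑ F ∈ (Finset.univ \ P).powerset.filter (fun F =>
            ¬ HasCycle (fun f => (ends f).map fun w =>
              if w = u ∨ w = v ∨ ∃ g ∈ P, w ∈ ends g then u else w) F),
            x ^ (P.card + F.card) := by
      intro P _
      rw [show ZmultOn (fun f => (ends f).map fun w =>
            if w = u ∨ w = v ∨ ∃ g ∈ P, w ∈ ends g then u else w) P x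
          = ∑ F ∈ (Finset.univ \ P).powerset.filter (fun F =>
            ¬ HasCycle (fun f => (ends f).map fun w =>
              if w = u ∨ w = v ∨ ∃ g ∈ P, w ∈ ends g then u else w) F), x ^ F.card from rfl,
        Finset.mul_sum]
      exact Finset.sum_congr rfl (fun F _ => (pow_add x _ _).symm)
    rw [Finset.sum_congr rfl hRHS,
      Finset.sum_sigma' (pathSets ends u v)
        (fun P => (Finset.univ \ P).powerset.filter (fun F =>
            ¬ HasCycle (fun f => (ends f).map fun w =>
              if w = u ∨ w = v ∨ ∃ g ∈ P, w ∈ ends g then u else w) F))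
        (fun P F => x ^ (P.card + F.card))]
    refine (Finset.sum_bij (fun a _ => a.1 ∪ a.2) ?_ ?_ ?_ ?_).symm
    · -- membership
      rintro ⟨P, F⟩ ha
      rw [Finset.mem_sigma] at ha
      obtain ⟨hPmem, hFmem⟩ := ha
      rw [Finset.mem_filter, Finset.mem_powerset] at hFmem
      obtain ⟨hFsub, hFnc⟩ := hFmem
      rw [Finset.mem_filter]
      refine ⟨Finset.mem_filter.mpr ⟨Finset.mem_powerset.mpr (Finset.subset_univ _), ?_⟩,
        ⟨P, hPmem, Finset.subset_union_left⟩⟩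
      intro hcy
      obtain ⟨N, pv, pe, hp, hPm, hPs, -⟩ := fn_of_isPathSet e (mem_pathSets_iff.mp hPmem)
      apply hFnc
      refine contract_cycle_proj hp hPs _ (r_spec hp hPm hPs).1 ?_
      rwa [Finset.union_comm]
    · -- injectivity
      rintro ⟨P1, F1⟩ ha1 ⟨P2, F2⟩ ha2 hEq
      rw [Finset.mem_sigma] at ha1 ha2
      obtain ⟨hP1mem, hF1mem⟩ := ha1
      obtain ⟨hP2mem, hF2mem⟩ := ha2
      rw [Finset.mem_filter, Finset.mem_powerset] at hF1mem hF2mem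
      simp only [] at hEq
      obtain ⟨N1, pv1, pe1, hp1, hPm1, hPs1, -⟩ := fn_of_isPathSet e (mem_pathSets_iff.mp hP1mem)
      obtain ⟨N2, pv2, pe2, hp2, hPm2, hPs2, -⟩ := fn_of_isPathSet e (mem_pathSets_iff.mp hP2mem)
      have hGnc : ¬ HasCycle ends (P1 ∪ F1) := by
        intro hcy
        apply hF1mem.2
        refine contract_cycle_proj hp1 hPs1 _ (r_spec hp1 hPm1 hPs1).1 ?_
        rwa [Finset.union_comm]
      have hPP : P1 = P2 := by
        by_contra hne
        apply hGnc
        apply hasCycle_mono (two_paths_cycle hp1 hp2 hPm1 hPs1 hPm2 hPs2 hne)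
        refine Finset.union_subset Finset.subset_union_left ?_
        rw [hEq]
        exact Finset.subset_union_left
      subst hPP
      have hFF : F1 = F2 := by
        have hd1 : ∀ g ∈ F1, g ∉ P1 := fun g hg => (Finset.mem_sdiff.mp (hF1mem.1 hg)).2
        have hd2 : ∀ g ∈ F2, g ∉ P1 := fun g hg => (Finset.mem_sdiff.mp (hF2mem.1 hg)).2
        ext g
        constructor
        · intro hg
          have : g ∈ P1 ∪ F2 := hEq ▸ (Finset.mem_union_right _ hg)
          rcases Finset.mem_union.mp this with h | h
          · exact absurd h (hd1 g hg)
          · exact h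
        · intro hg
          have : g ∈ P1 ∪ F1 := hEq ▸ (Finset.mem_union_right _ hg)
          rcases Finset.mem_union.mp this with h | h
          · exact absurd h (hd2 g hg)
          · exact h
      rw [hFF]
    · -- surjectivity
      intro G hG
      rw [Finset.mem_filter] at hG
      obtain ⟨hGs, Q, hQmem, hQsub⟩ := hG
      rw [Finset.mem_filter, Finset.mem_powerset] at hGs
      obtain ⟨-, hGnc⟩ := hGs
      obtain ⟨N, pv, pe, hp, hPm, hPs, -⟩ := fn_of_isPathSet e (mem_pathSets_iff.mp hQmem)
      refine ⟨⟨Q, G \ Q⟩, ?_, ?_⟩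
      · rw [Finset.mem_sigma]
        refine ⟨hQmem, Finset.mem_filter.mpr ⟨Finset.mem_powerset.mpr ?_, ?_⟩⟩
        · intro g hg
          rw [Finset.mem_sdiff] at hg ⊢
          exact ⟨Finset.mem_univ g, hg.2⟩
        · intro hcy
          apply hGnc
          have := contract_cycle_lift hp hPm (fun g hg => (Finset.mem_sdiff.mp hg).2)
            _ (r_spec hp hPm hPs).1 (r_spec hp hPm hPs).2.1 (r_spec hp hPm hPs).2.2 hcy
          rwa [Finset.sdiff_union_of_subset hQsub] at this
      · show Q ∪ (G \ Q) = G
        rw [Finset.union_sdiff_of_subset hQsub]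
    · -- weights
      rintro ⟨P, F⟩ ha
      rw [Finset.mem_sigma] at ha
      obtain ⟨-, hFmem⟩ := ha
      rw [Finset.mem_filter, Finset.mem_powerset] at hFmem
      have hdisj : Disjoint P F := by
        rw [Finset.disjoint_left]
        intro g hgP hgF
        exact (Finset.mem_sdiff.mp (hFmem.1 hgF)).2 hgP
      show x ^ (P.card + F.card) = x ^ (P ∪ F).card
      rw [Finset.card_union_of_disjoint hdisj]
end
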